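/- arXiv:2305.00372 — 6 statements merged into one kernel-verified Lean document; each statement's English description precedes it below -/
import Mathlib

section
/- Let L be a dcpo and U an upper subset of L. If for every well-ordered chain C of L with sup C ∈ U we have C ∩ U ≠ ∅, then U is Scott open. -/
open Set TopologicalSpace

universe u

section OrderDefs

variable {X : Type u}

/-- `U` is an upper set with respect to the relation `le`. -/
def IsUpperSetWrt (le : X → X → Prop) (U : Set X) : Prop :=
  ∀ ⦃x⦄, x ∈ U → ∀ ⦃y⦄, le x y → y ∈ U

/-- `s` is an upper bound of `D` with respect to `le`. -/
def IsUBWrt (le : X → X → Prop) (D : Set X) (s : X) : Prop := ∀ d ∈ D, le d s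

/-- `s` is a least upper bound (supremum) of `D` with respect to `le`. -/
def IsSupWrt (le : X → X → Prop) (D : Set X) (s : X) : Prop :=
  IsUBWrt le D s ∧ ∀ t, IsUBWrt le D t → le s t

/-- `D` is a (nonempty) directed subset with respect to `le`. -/
def DirectedSubset (le : X → X → Prop) (D : Set X) : Prop :=
  D.Nonempty ∧ ∀ a ∈ D, ∀ b ∈ D, ∃ c ∈ D, le a c ∧ le b c

/-- `U` is Scott open with respect to `le`: an upper set inaccessible by directed suprema. -/
def ScottOpenWrt (le : X → X → Prop) (U : Set X) : Prop :=
  IsUpperSetWrt le U ∧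
    ∀ D, DirectedSubset le D → ∀ s, IsSupWrt le D s → s ∈ U → (D ∩ U).Nonempty

/-- The Scott topology determined by the relation `le`. -/
def scottTop (le : X → X → Prop) : TopologicalSpace X where
  IsOpen := ScottOpenWrt le
  isOpen_univ := by
    refine ⟨fun x _ y _ => trivial, fun D hD s _ _ => ?_⟩
    obtain ⟨d, hd⟩ := hD.1
    exact ⟨d, hd, trivial⟩
  isOpen_inter := by
    rintro U V ⟨hUup, hUd⟩ ⟨hVup, hVd⟩
    refine ⟨fun x hx y hxy => ⟨hUup hx.1 hxy, hVup hx.2 hxy⟩, ?_⟩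
    rintro D hD s hs ⟨hsU, hsV⟩
    obtain ⟨a, haD, haU⟩ := hUd D hD s hs hsU
    obtain ⟨b, hbD, hbV⟩ := hVd D hD s hs hsV
    obtain ⟨c, hcD, hac, hbc⟩ := hD.2 a haD b hbD
    exact ⟨c, hcD, hUup haU hac, hVup hbV hbc⟩
  isOpen_sUnion := by
    intro S hS
    refine ⟨fun x hx y hxy => ?_, ?_⟩
    · obtain ⟨U, hU, hxU⟩ := hx
      exact ⟨U, hU, (hS U hU).1 hxU hxy⟩
    · rintro D hD s hs ⟨U, hU, hsU⟩
      obtain ⟨d, hdD, hdU⟩ := (hS U hU).2 D hD s hs hsU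
      exact ⟨d, hdD, U, hU, hdU⟩

end OrderDefs

section TopDefs

variable {X : Type u} [TopologicalSpace X]

/-- The specialization order of a topological space: `x ≤ y` iff `x ∈ cl {y}`. -/
def specLE (x y : X) : Prop := x ∈ closure ({y} : Set X)

/-- The upward closure of `A` in the specialization order. -/
def upSet (A : Set X) : Set X := {y | ∃ a ∈ A, specLE a y}

/-- `V` is way below `U`: every open cover of `U` admits a finite subfamily covering `V`. -/
def WayBelow (V U : Set X) : Prop :=
  ∀ S : Set (Set X), (∀ W ∈ S, IsOpen W) → U ⊆ ⋃₀ S →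
    ∃ F : Finset (Set X), ↑F ⊆ S ∧ V ⊆ ⋃₀ (F : Set (Set X))

/-- A space is core compact if its lattice of open sets is continuous, i.e. every open
set is the union of the open sets way below it. -/
def CoreCompact (X : Type u) [TopologicalSpace X] : Prop :=
  ∀ U : Set X, IsOpen U → ∀ x ∈ U, ∃ V : Set X, IsOpen V ∧ x ∈ V ∧ WayBelow V U

/-- `V` is open in the core compactly generated topology:
preimages under every continuous map from a core compact space are open. -/
def ccgOpen (X : Type u) [TopologicalSpace X] (V : Set X) : Prop :=
  ∀ (C : Type u) (tC : TopologicalSpace C), CoreCompact C →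
    ∀ ρ : C → X, Continuous ρ → IsOpen (ρ ⁻¹' V)

/-- The core compactly generated topology `𝒞X`. -/
def ccgTopology (X : Type u) [TopologicalSpace X] : TopologicalSpace X where
  IsOpen := ccgOpen X
  isOpen_univ := by intro C tC _ ρ hρ; simpa using isOpen_univ
  isOpen_inter := by
    intro U V hU hV C tC hc ρ hρ
    exact (hU C tC hc ρ hρ).inter (hV C tC hc ρ hρ)
  isOpen_sUnion := by
    intro S hS C tC hc ρ hρ
    rw [preimage_sUnion]
    exact isOpen_biUnion fun t ht => hS t ht C tC hc ρ hρ

/-- A space is core compactly generated if its topology coincides with the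
core compactly generated topology. -/
def CCGenerated (X : Type u) [t : TopologicalSpace X] : Prop := ccgTopology X = t

/-- A set is saturated if it is the intersection of the open sets containing it. -/
def Saturated (K : Set X) : Prop := K = ⋂₀ {U : Set X | IsOpen U ∧ K ⊆ U}

/-- A T₀ space is well-filtered if every filtered family of nonempty compact saturated sets
whose intersection is contained in an open set has a member contained in that open set. -/
def WellFiltered (X : Type u) [TopologicalSpace X] : Prop :=
  T0Space X ∧ ∀ 𝒦 : Set (Set X), 𝒦.Nonempty →
    (∀ K ∈ 𝒦, K.Nonempty ∧ IsCompact K ∧ Saturated K) →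
    (∀ K₁ ∈ 𝒦, ∀ K₂ ∈ 𝒦, ∃ K₃ ∈ 𝒦, K₃ ⊆ K₁ ∧ K₃ ⊆ K₂) →
    ∀ U : Set X, IsOpen U → ⋂₀ 𝒦 ⊆ U → ∃ K ∈ 𝒦, K ⊆ U

/-- A T₀ space is ω-well-filtered if the well-filteredness condition holds for
countable filtered families of nonempty compact saturated sets. -/
def OmegaWellFiltered (X : Type u) [TopologicalSpace X] : Prop :=
  T0Space X ∧ ∀ K : ℕ → Set X,
    (∀ n, (K n).Nonempty ∧ IsCompact (K n) ∧ Saturated (K n)) →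
    (∀ m n, ∃ k, K k ⊆ K m ∧ K k ⊆ K n) →
    ∀ U : Set X, IsOpen U → (⋂ n, K n) ⊆ U → ∃ n, K n ⊆ U

/-- A space is sober if it is T₀ and every irreducible closed set is the closure of a
(unique) point. -/
def SoberSpace (X : Type u) [TopologicalSpace X] : Prop :=
  T0Space X ∧ ∀ A : Set X, IsIrreducible A → IsClosed A → ∃! x : X, A = closure ({x} : Set X)

/-- A T₀ space is a monotone convergence space if the closure of every directed subset
(in the specialization order) is the closure of a point. -/
def MonotoneConvergenceSpace (X : Type u) [TopologicalSpace X] : Prop :=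
  T0Space X ∧ ∀ D : Set X, DirectedSubset specLE D → ∃ x : X, closure D = closure ({x} : Set X)

/-- The hull-kernel style topology on a family of subsets of `X`, generated by the sets
`U^s = {A | A ∩ U ≠ ∅}` for `U` open in `X`. -/
def hullTop (S : Set X → Prop) : TopologicalSpace {A : Set X // S A} :=
  generateFrom {s : Set {A : Set X // S A} |
    ∃ U : Set X, IsOpen U ∧ s = {A : {A : Set X // S A} | ((A : Set X) ∩ U).Nonempty}}

end TopDefs


section AuxStmt0

open Cardinal

variable {L : Type u} [PartialOrder L]

private lemma stmt0_isWF_range {ι : Type*} [LinearOrder ι] [WellFoundedLT ι]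
    {f : ι → L} (hf : Monotone f) : (Set.range f).IsWF := by
  rw [Set.IsWF, Set.wellFoundedOn_range]
  refine Subrelation.wf (r := fun a b : ι => a < b) ?_ wellFounded_lt
  intro a b h
  have h' : f a < f b := h
  by_contra hab
  exact absurd (hf (not_lt.mp hab)) (not_le_of_gt h')

private lemma stmt0_isChain_range {ι : Type*} [LinearOrder ι]
    {f : ι → L} (hf : Monotone f) : IsChain (· ≤ ·) (Set.range f) := by
  rintro _ ⟨m, rfl⟩ _ ⟨n, rfl⟩ _
  rcases le_total m n with h | h
  · exact Or.inl (hf h)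
  · exact Or.inr (hf h)

/-- A monotone "directed closure" operator: closes a subset of a directed set `D`
to a directed subset of `D` of cardinality at most `max #A ℵ₀`. -/
private lemma stmt0_closure {D : Set L}
    (hD : ∀ a ∈ D, ∀ b ∈ D, ∃ c ∈ D, a ≤ c ∧ b ≤ c) :
    ∃ cl : Set L → Set L, Monotone cl ∧ ∀ A : Set L, A ⊆ D →
      A ⊆ cl A ∧ cl A ⊆ D ∧ (∀ a ∈ cl A, ∀ b ∈ cl A, ∃ c ∈ cl A, a ≤ c ∧ b ≤ c) ∧
      #(cl A) ≤ max #A ℵ₀ := by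
  classical
  -- choose upper bounds
  set f : L → L → L := fun a b =>
    if h : a ∈ D ∧ b ∈ D then (hD a h.1 b h.2).choose else a with hfdef
  have hf : ∀ a ∈ D, ∀ b ∈ D, f a b ∈ D ∧ a ≤ f a b ∧ b ≤ f a b := by
    intro a ha b hb
    have h : a ∈ D ∧ b ∈ D := ⟨ha, hb⟩
    have := (hD a ha b hb).choose_spec
    simp only [hfdef, dif_pos h]
    exact this
  set g : Set L → Set L := fun B => B ∪ Set.image2 f B B with hgdef
  have hgmono : Monotone g := fun B B' h =>
    Set.union_subset_union h (Set.image2_subset h h)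
  have hgsub : ∀ B, B ⊆ g B := fun B => Set.subset_union_left
  refine ⟨fun A => ⋃ n : ULift.{u} ℕ, g^[n.down] A, ?_, ?_⟩
  · intro A B hAB
    exact Set.iUnion_mono fun n => by
      induction n.down with
      | zero => exact hAB
      | succ k ih => simp only [Function.iterate_succ_apply']
                     exact hgmono ih
  · intro A hAD
    have hiter_sub : ∀ n, g^[n] A ⊆ D := by
      intro n
      induction n with
      | zero => exact hAD
      | succ k ih =>
        rw [Function.iterate_succ_apply']
        rintro x (hx | hx)
        · exact ih hx
        · obtain ⟨a, ha, b, hb, rfl⟩ := hx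
          exact (hf a (ih ha) b (ih hb)).1
    have hiter_mono : Monotone fun n => g^[n] A := by
      apply monotone_nat_of_le_succ
      intro n
      rw [Function.iterate_succ_apply']
      exact hgsub _
    refine ⟨?_, ?_, ?_, ?_⟩
    · exact le_iSup (fun n : ULift.{u} ℕ => g^[n.down] A) ⟨0⟩
    · exact Set.iUnion_subset fun n => hiter_sub n.down
    · intro a ha b hb
      obtain ⟨_, ⟨m, rfl⟩, ham⟩ := ha
      obtain ⟨_, ⟨n, rfl⟩, hbn⟩ := hb
      have ham' : a ∈ g^[max m.down n.down] A := hiter_mono (le_max_left _ _) ham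
      have hbn' : b ∈ g^[max m.down n.down] A := hiter_mono (le_max_right _ _) hbn
      have hc : f a b ∈ g^[max m.down n.down + 1] A := by
        rw [Function.iterate_succ_apply']
        exact Or.inr (Set.mem_image2_of_mem ham' hbn')
      have haD := hiter_sub _ ham'
      have hbD := hiter_sub _ hbn'
      exact ⟨f a b, Set.mem_iUnion.2 ⟨⟨max m.down n.down + 1⟩, hc⟩,
        (hf a haD b hbD).2.1, (hf a haD b hbD).2.2⟩
    · set m : Cardinal := max #A ℵ₀ with hm
      have hm0 : ℵ₀ ≤ m := le_max_right _ _
      have hiter_card : ∀ n, #(g^[n] A) ≤ m := by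
        intro n
        induction n with
        | zero => exact le_max_left _ _
        | succ k ih =>
          rw [Function.iterate_succ_apply']
          calc #(g (g^[k] A)) ≤ #(g^[k] A) + #(Set.image2 f (g^[k] A) (g^[k] A)) :=
                Cardinal.mk_union_le _ _
            _ ≤ m + m * m := by
                refine add_le_add ih (le_trans Cardinal.mk_image2_le ?_)
                exact mul_le_mul' ih ih
            _ = m := by rw [Cardinal.mul_eq_self hm0, Cardinal.add_eq_self hm0]
      calc #(⋃ n : ULift.{u} ℕ, g^[n.down] A)
          ≤ #(ULift.{u} ℕ) * ⨆ n : ULift.{u} ℕ, #(g^[n.down] A) :=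
            Cardinal.mk_iUnion_le _
        _ ≤ ℵ₀ * m := by
            refine mul_le_mul' ?_ (ciSup_le' fun n => hiter_card n.down)
            simp
        _ ≤ m * m := mul_le_mul' hm0 le_rfl
        _ = m := Cardinal.mul_eq_self hm0

private lemma stmt0_key {L : Type u} [PartialOrder L]
    (hdcpo : ∀ D : Set L, DirectedSubset (· ≤ · : L → L → Prop) D →
      ∃ s : L, IsSupWrt (· ≤ ·) D s)
    (U : Set L)
    (hchain : ∀ C : Set L, IsChain (· ≤ ·) C → C.IsWF →
      ∀ s : L, IsSupWrt (· ≤ ·) C s → s ∈ U → (C ∩ U).Nonempty) :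
    ∀ κ : Cardinal.{u}, ∀ D : Set L, DirectedSubset (· ≤ · : L → L → Prop) D →
      Cardinal.mk D ≤ κ → ∀ s : L, IsSupWrt (· ≤ ·) D s → s ∈ U → (D ∩ U).Nonempty := by
  classical
  intro κ
  refine Cardinal.lt_wf.induction
    (C := fun κ => ∀ D : Set L, DirectedSubset (· ≤ · : L → L → Prop) D →
      Cardinal.mk D ≤ κ → ∀ s : L, IsSupWrt (· ≤ ·) D s → s ∈ U → (D ∩ U).Nonempty) κ ?_
  clear κ
  intro κ IH D hD hcard s hs hsU
  by_cases hc : D.Countable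
  · -- countable case: build a cofinal ω-chain inside D
    obtain ⟨f, rfl⟩ := hc.exists_eq_range hD.1
    have hfmem : ∀ n : ℕ, f n ∈ Set.range f := fun n => Set.mem_range_self n
    let c : ℕ → {x : L // x ∈ Set.range f} := fun n =>
      Nat.rec ⟨f 0, hfmem 0⟩
        (fun k p => ⟨(hD.2 p.1 p.2 (f (k+1)) (hfmem (k+1))).choose,
          ((hD.2 p.1 p.2 (f (k+1)) (hfmem (k+1))).choose_spec).1⟩) n
    have hstep : ∀ k : ℕ, (c k).1 ≤ (c (k+1)).1 ∧ f (k+1) ≤ (c (k+1)).1 := by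
      intro k
      have h := (hD.2 (c k).1 (c k).2 (f (k+1)) (hfmem (k+1))).choose_spec
      exact ⟨h.2.1, h.2.2⟩
    have hmono : Monotone fun n => (c n).1 :=
      monotone_nat_of_le_succ fun n => (hstep n).1
    have hfle : ∀ n, f n ≤ (c n).1 := by
      intro n
      cases n with
      | zero => exact le_rfl
      | succ k => exact (hstep k).2
    have hCsub : Set.range (fun n => (c n).1) ⊆ Set.range f := by
      rintro _ ⟨n, rfl⟩
      exact (c n).2
    have hCsup : IsSupWrt (· ≤ ·) (Set.range fun n => (c n).1) s := by
      constructor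
      · rintro _ ⟨n, rfl⟩
        exact hs.1 _ ((c n).2)
      · intro u hu
        refine hs.2 u ?_
        rintro d ⟨n, rfl⟩
        exact le_trans (hfle n) (hu _ ⟨n, rfl⟩)
    obtain ⟨x, hxC, hxU⟩ :=
      hchain _ (stmt0_isChain_range hmono) (stmt0_isWF_range hmono) s hCsup hsU
    exact ⟨x, hCsub hxC, hxU⟩
  · -- uncountable case
    have hℵ : ℵ₀ < #(↥D) :=
      lt_of_not_ge fun h => hc (Set.countable_coe_iff.mp (Cardinal.mk_le_aleph0_iff.mp h))
    obtain ⟨cl, hclmono, hcl⟩ := stmt0_closure hD.2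
    have hι : #((#(↥D)).ord.ToType) = #(↥D) := by
      rw [Cardinal.mk_toType, Cardinal.card_ord]
    obtain ⟨e⟩ : Nonempty ((#(↥D)).ord.ToType ≃ ↥D) := Cardinal.eq.1 hι
    set ι := (#(↥D)).ord.ToType with hιdef
    let A : ι → Set L := fun i => insert ((e i : L)) ((fun j : ι => (e j : L)) '' Set.Iio i)
    have hAD : ∀ i, A i ⊆ D := by
      rintro i x (rfl | ⟨j, _, rfl⟩)
      · exact (e i).2
      · exact (e j).2
    have hAmono : Monotone A := by
      intro i j hij
      rcases eq_or_lt_of_le hij with rfl | hlt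
      · exact le_rfl
      · rintro x (rfl | ⟨k, hk, rfl⟩)
        · exact Or.inr ⟨i, hlt, rfl⟩
        · exact Or.inr ⟨k, lt_trans hk hlt, rfl⟩
    let E : ι → Set L := fun i => cl (A i)
    have hE : ∀ i, A i ⊆ E i ∧ E i ⊆ D ∧
        (∀ a ∈ E i, ∀ b ∈ E i, ∃ c ∈ E i, a ≤ c ∧ b ≤ c) ∧ #(E i) ≤ max #(A i) ℵ₀ :=
      fun i => hcl (A i) (hAD i)
    have hEmono : Monotone E := fun i j hij => hclmono (hAmono hij)
    have hEdirected : ∀ i, DirectedSubset (· ≤ · : L → L → Prop) (E i) :=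
      fun i => ⟨⟨e i, (hE i).1 (Set.mem_insert _ _)⟩, (hE i).2.2.1⟩
    choose t ht using fun i => hdcpo (E i) (hEdirected i)
    have htmono : Monotone t := fun i j hij =>
      (ht i).2 (t j) (fun d hd => (ht j).1 d (hEmono hij hd))
    have hCsup : IsSupWrt (· ≤ ·) (Set.range t) s := by
      constructor
      · rintro _ ⟨i, rfl⟩
        exact (ht i).2 s (fun d hd => hs.1 d ((hE i).2.1 hd))
      · intro u hu
        refine hs.2 u ?_
        intro d hd
        have heq : d = (e (e.symm ⟨d, hd⟩) : L) := by
          rw [e.apply_symm_apply]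
        have hdE : d ∈ E (e.symm ⟨d, hd⟩) := by
          refine (hE _).1 ?_
          exact Set.mem_insert_iff.mpr (Or.inl heq)
        exact le_trans ((ht _).1 d hdE) (hu _ ⟨_, rfl⟩)
    obtain ⟨x, hxC, hxU⟩ :=
      hchain _ (stmt0_isChain_range htmono) (stmt0_isWF_range htmono) s hCsup hsU
    obtain ⟨i, rfl⟩ := hxC
    have hIio : #(Set.Iio i) < #(↥D) := Cardinal.mk_Iio_ord_toType i
    have hAcard : #(A i) ≤ #(Set.Iio i) + 1 :=
      le_trans Cardinal.mk_insert_le (add_le_add_left Cardinal.mk_image_le 1)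
    have hEcard : #(E i) < #(↥D) := by
      refine lt_of_le_of_lt (hE i).2.2.2 (max_lt ?_ hℵ)
      refine lt_of_le_of_lt hAcard ?_
      exact Cardinal.add_lt_of_lt hℵ.le hIio (lt_trans Cardinal.one_lt_aleph0 hℵ)
    obtain ⟨x, hxE, hxU'⟩ := IH (#(E i)) (lt_of_lt_of_le hEcard hcard) (E i)
      (hEdirected i) le_rfl (t i) (ht i) hxU
    exact ⟨x, (hE i).2.1 hxE, hxU'⟩

end AuxStmt0
/-- In a dcpo `L`, an upper set `U` such that every well-ordered chain whose
supremum lies in `U` meets `U` is Scott open. -/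
theorem stmt0 {L : Type u} [PartialOrder L]
    (hdcpo : ∀ D : Set L, DirectedSubset (· ≤ · : L → L → Prop) D →
      ∃ s : L, IsSupWrt (· ≤ ·) D s)
    (U : Set L) (hup : IsUpperSetWrt (· ≤ · : L → L → Prop) U)
    (hchain : ∀ C : Set L, IsChain (· ≤ ·) C → C.IsWF →
      ∀ s : L, IsSupWrt (· ≤ ·) C s → s ∈ U → (C ∩ U).Nonempty) :
    ScottOpenWrt (· ≤ · : L → L → Prop) U :=
  ⟨hup, fun D hD s hs hsU =>
    stmt0_key hdcpo U hchain (Cardinal.mk D) D hD le_rfl s hs hsU⟩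
end

section
/- Let X be a monotone convergence space with topology τ. Then every set that is open in the core compactly generated topology of X is Scott open with respect to the specialization order of X; that is, CX ⊆ σ(X). -/
open Set TopologicalSpace

universe u

section Stmt2Aux

variable {X : Type u} [TopologicalSpace X]

lemma specLE_refl' (x : X) : specLE x x := subset_closure rfl

lemma specLE_trans' {x y z : X} (h1 : specLE x y) (h2 : specLE y z) : specLE x z :=
  closure_minimal (Set.singleton_subset_iff.2 h2) isClosed_closure h1

lemma mem_of_specLE' {x y : X} (h : specLE x y) {O : Set X} (hO : IsOpen O) (hx : x ∈ O) :
    y ∈ O := by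
  obtain ⟨z, hzO, hz⟩ := mem_closure_iff.1 h O hO hx
  rw [Set.mem_singleton_iff] at hz
  exact hz ▸ hzO

lemma specLE_antisymm' [T0Space X] {x y : X} (h1 : specLE x y) (h2 : specLE y x) : x = y :=
  ((specializes_iff_mem_closure.2 h2).antisymm (specializes_iff_mem_closure.2 h1)).eq

lemma wayBelow_of_forall' {V U : Set X}
    (h : ∀ S : Set (Set X), (∀ W ∈ S, IsOpen W) → U ⊆ ⋃₀ S → ∃ W ∈ S, V ⊆ W) :
    WayBelow V U := by
  intro S hS hUS
  obtain ⟨W, hWS, hVW⟩ := h S hS hUS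
  exact ⟨{W}, by simpa using hWS, by simpa using hVW⟩

/-- The Sierpiński topology on `ULift Bool`, where `up true` is the generic point. -/
def sierTop : TopologicalSpace (ULift.{u} Bool) where
  IsOpen U := ULift.up false ∈ U → ULift.up true ∈ U
  isOpen_univ := fun _ => trivial
  isOpen_inter := fun _ _ hU hV h => ⟨hU h.1, hV h.2⟩
  isOpen_sUnion := by
    rintro S hS ⟨U, hUS, hU⟩
    exact ⟨U, hUS, hS U hUS hU⟩

lemma sier_corecompact : @CoreCompact (ULift.{u} Bool) sierTop := by
  letI := sierTop.{u}
  intro U hU x hx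
  obtain ⟨b⟩ := x
  cases b with
  | false =>
    have hfU : ULift.up false ∈ U := hx
    refine ⟨Set.univ, isOpen_univ, trivial, wayBelow_of_forall' ?_⟩
    intro S hS hUS
    obtain ⟨W, hWS, hfW⟩ := hUS hfU
    refine ⟨W, hWS, fun c _ => ?_⟩
    obtain ⟨c⟩ := c
    cases c with
    | false => exact hfW
    | true => exact (hS W hWS) hfW
  | true =>
    have hxt : (⟨true⟩ : ULift.{u} Bool) = ULift.up true := rfl
    refine ⟨{ULift.up true}, ?_, by simp [hxt], wayBelow_of_forall' ?_⟩
    · intro hf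
      exact absurd hf (by simp)
    · intro S hS hUS
      obtain ⟨W, hWS, htW⟩ := hUS hx
      refine ⟨W, hWS, ?_⟩
      rintro c hc
      rw [Set.mem_singleton_iff] at hc
      exact hc ▸ htW

/-- The subtype `D ∪ {s}`. -/
def dirType (D : Set X) (s : X) : Type u := {c : X // c ∈ insert s D}

/-- The Scott-like topology on `D ∪ {s}`. -/
def dirTop (D : Set X) (s : X) (hD : DirectedSubset specLE D) :
    TopologicalSpace (dirType D s) where
  IsOpen U := (∀ ⦃a : dirType D s⦄, a ∈ U → ∀ ⦃b : dirType D s⦄, specLE a.1 b.1 → b ∈ U) ∧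
    ((⟨s, Set.mem_insert _ _⟩ : dirType D s) ∈ U → ∃ b : dirType D s, b.1 ∈ D ∧ b ∈ U)
  isOpen_univ := by
    refine ⟨fun a _ b _ => trivial, fun _ => ?_⟩
    obtain ⟨d, hd⟩ := hD.1
    exact ⟨⟨d, Set.mem_insert_of_mem _ hd⟩, hd, trivial⟩
  isOpen_inter := by
    rintro U V ⟨hUu, hUs⟩ ⟨hVu, hVs⟩
    refine ⟨fun a ha b hab => ⟨hUu ha.1 hab, hVu ha.2 hab⟩, fun hs => ?_⟩
    obtain ⟨d1, hd1D, hd1U⟩ := hUs hs.1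
    obtain ⟨d2, hd2D, hd2V⟩ := hVs hs.2
    obtain ⟨c, hcD, h1c, h2c⟩ := hD.2 d1.1 hd1D d2.1 hd2D
    exact ⟨⟨c, Set.mem_insert_of_mem _ hcD⟩, hcD, hUu hd1U h1c, hVu hd2V h2c⟩
  isOpen_sUnion := by
    intro S hS
    refine ⟨fun a ha b hab => ?_, fun hs => ?_⟩
    · obtain ⟨U, hUS, haU⟩ := ha
      exact ⟨U, hUS, (hS U hUS).1 haU hab⟩
    · obtain ⟨U, hUS, hsU⟩ := hs
      obtain ⟨d, hdD, hdU⟩ := (hS U hUS).2 hsU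
      exact ⟨d, hdD, U, hUS, hdU⟩

lemma dir_isOpen_iff (D : Set X) (s : X) (hD : DirectedSubset specLE D) {U : Set (dirType D s)} :
    @IsOpen _ (dirTop D s hD) U ↔
      (∀ ⦃a : dirType D s⦄, a ∈ U → ∀ ⦃b : dirType D s⦄, specLE a.1 b.1 → b ∈ U) ∧
      ((⟨s, Set.mem_insert _ _⟩ : dirType D s) ∈ U →
        ∃ b : dirType D s, b.1 ∈ D ∧ b ∈ U) := Iff.rfl

lemma dir_corecompact (D : Set X) (s : X) (hD : DirectedSubset specLE D)
    (hub : ∀ d ∈ D, specLE d s) :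
    @CoreCompact (dirType D s) (dirTop D s hD) := by
  letI := dirTop D s hD
  intro U hU x hx
  rw [dir_isOpen_iff] at hU
  have hd : ∃ d : dirType D s, d.1 ∈ D ∧ d ∈ U ∧ specLE d.1 x.1 := by
    rcases Set.mem_insert_iff.1 x.2 with hxs | hxD
    · have hxe : x = ⟨s, Set.mem_insert _ _⟩ := Subtype.ext hxs
      obtain ⟨d, hdD, hdU⟩ := hU.2 (hxe ▸ hx)
      exact ⟨d, hdD, hdU, by rw [hxs]; exact hub d.1 hdD⟩
    · exact ⟨x, hxD, hx, specLE_refl' _⟩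
  obtain ⟨d, hdD, hdU, hdx⟩ := hd
  refine ⟨{c : dirType D s | specLE d.1 c.1},
    (dir_isOpen_iff D s hD).2 ⟨fun a ha b hab => specLE_trans' ha hab,
      fun _ => ⟨d, hdD, specLE_refl' _⟩⟩, hdx, wayBelow_of_forall' ?_⟩
  intro S hS hUS
  obtain ⟨W, hWS, hdW⟩ := hUS hdU
  exact ⟨W, hWS, fun c hc => ((dir_isOpen_iff D s hD).1 (hS W hWS)).1 hdW hc⟩

lemma dir_continuous (D : Set X) (s : X) (hD : DirectedSubset specLE D)
    (hscl : s ∈ closure D) :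
    @Continuous (dirType D s) X (dirTop D s hD) _ Subtype.val := by
  letI := dirTop D s hD
  refine continuous_def.2 ?_
  intro O hO
  rw [dir_isOpen_iff]
  refine ⟨fun a ha b hab => mem_of_specLE' hab hO ha, fun hs => ?_⟩
  obtain ⟨d, hdO, hdD⟩ := mem_closure_iff.1 hscl O hO hs
  exact ⟨⟨d, Set.mem_insert_of_mem _ hdD⟩, hdD, hdO⟩

end Stmt2Aux

/-- for a monotone convergence space `X`, every set open in the core compactly
generated topology of `X` is Scott open with respect to the specialization order. -/
theorem stmt2 {X : Type u} [TopologicalSpace X] (h : MonotoneConvergenceSpace X) :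
    ∀ V : Set X, ccgOpen X V → ScottOpenWrt (specLE : X → X → Prop) V := by
  obtain ⟨ht0, hmc⟩ := h
  haveI := ht0
  intro V hV
  constructor
  · -- upper set, via the Sierpiński space
    intro x hx y hxy
    set ρ : ULift.{u} Bool → X := fun b => if b.down then y else x with hρ
    have hcont : @Continuous _ _ sierTop _ ρ := by
      letI := sierTop.{u}
      rw [continuous_def]
      intro O hO hf
      show ρ (ULift.up true) ∈ O
      exact mem_of_specLE' hxy hO hf
    have hop := hV (ULift.{u} Bool) sierTop sier_corecompact ρ hcont
    exact hop hx
  · intro D hD s hs hsV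
    obtain ⟨z, hz⟩ := hmc D hD
    have hzsup : IsSupWrt specLE D z := by
      constructor
      · intro d hd
        have hd' : d ∈ closure D := subset_closure hd
        rw [hz] at hd'
        exact hd'
      · intro t ht
        have hDt : closure D ⊆ closure ({t} : Set X) :=
          closure_minimal (fun d hd => ht d hd) isClosed_closure
        exact hDt (by rw [hz]; exact subset_closure rfl)
    have hsz : s = z := specLE_antisymm' (hs.2 z hzsup.1) (hzsup.2 s hs.1)
    have hscl : s ∈ closure D := by rw [hsz, hz]; exact subset_closure rfl
    have hop := hV (dirType D s) (dirTop D s hD) (dir_corecompact D s hD hs.1)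
      Subtype.val (dir_continuous D s hD hscl)
    rw [dir_isOpen_iff] at hop
    have hsmem : (⟨s, Set.mem_insert _ _⟩ : dirType D s) ∈ Subtype.val ⁻¹' V := hsV
    obtain ⟨d, hdD, hdV⟩ := hop.2 hsmem
    exact ⟨d.1, hdD, hdV⟩
end

section
/- For any T₀ space X, every set open in the core compactly generated topology of X is an upper set with respect to the specialization order of X; in particular the core compactly generated topology has the same specialization order as X. -/
open Set TopologicalSpace

universe u

/-- The Sierpiński topology on `ULift Bool`, with `⟨true⟩` the open point. -/
def sierpTop : TopologicalSpace (ULift.{u} Bool) where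
  IsOpen s := (⟨false⟩ : ULift Bool) ∈ s → (⟨true⟩ : ULift Bool) ∈ s
  isOpen_univ := fun _ => trivial
  isOpen_inter := fun _ _ hU hV h => ⟨hU h.1, hV h.2⟩
  isOpen_sUnion := by
    rintro S hS ⟨U, hU, hfU⟩
    exact ⟨U, hU, hS U hU hfU⟩

lemma sierp_coreCompact : @CoreCompact (ULift.{u} Bool) sierpTop := by
  intro U hU x hx
  refine ⟨U, hU, hx, ?_⟩
  intro S hS hUS
  classical
  by_cases h0 : (⟨false⟩ : ULift.{u} Bool) ∈ U
  · obtain ⟨W0, hW0S, hW0⟩ := hUS h0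
    by_cases h1 : (⟨true⟩ : ULift.{u} Bool) ∈ U
    · obtain ⟨W1, hW1S, hW1⟩ := hUS h1
      refine ⟨{W0, W1}, ?_, ?_⟩
      · intro W hW
        simp only [Finset.coe_insert, Finset.coe_singleton, mem_insert_iff,
          mem_singleton_iff] at hW
        rcases hW with rfl | rfl <;> assumption
      · rintro ⟨b⟩ hp
        cases b
        · exact ⟨W0, by simp, hW0⟩
        · exact ⟨W1, by simp, hW1⟩
    · refine ⟨{W0}, by simpa using hW0S, ?_⟩
      rintro ⟨b⟩ hp
      cases b
      · exact ⟨W0, by simp, hW0⟩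
      · exact absurd hp h1
  · by_cases h1 : (⟨true⟩ : ULift.{u} Bool) ∈ U
    · obtain ⟨W1, hW1S, hW1⟩ := hUS h1
      refine ⟨{W1}, by simpa using hW1S, ?_⟩
      rintro ⟨b⟩ hp
      cases b
      · exact absurd hp h0
      · exact ⟨W1, by simp, hW1⟩
    · refine ⟨∅, by simp, ?_⟩
      rintro ⟨b⟩ hp
      cases b
      · exact absurd hp h0
      · exact absurd hp h1

/-- Open sets (in the original topology) are upper sets for the specialization order. -/
lemma isOpen_isUpperSetWrt {X : Type u} [TopologicalSpace X] {U : Set X} (hU : IsOpen U) :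
    IsUpperSetWrt (specLE : X → X → Prop) U := by
  intro x hx y hxy
  have := (mem_closure_iff.mp hxy) U hU hx
  obtain ⟨z, hzU, hz⟩ := this
  rwa [mem_singleton_iff.mp hz] at hzU

lemma isOpen_ccgOpen {X : Type u} [TopologicalSpace X] {U : Set X} (hU : IsOpen U) :
    ccgOpen X U := fun _ _ _ _ hρ => hρ.isOpen_preimage U hU

/-- for a T₀ space `X`, every core compactly generated open set is an upper
set in the specialization order; in particular the core compactly generated topology has
the same specialization order as `X`. -/
theorem stmt3 {X : Type u} [tX : TopologicalSpace X] [T0Space X] :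
    (∀ V : Set X, ccgOpen X V → IsUpperSetWrt (specLE : X → X → Prop) V) ∧
      (∀ x y : X, @specLE X (ccgTopology X) x y ↔ @specLE X tX x y) := by
  have upper : ∀ V : Set X, ccgOpen X V → IsUpperSetWrt (specLE : X → X → Prop) V := by
    intro V hV x hxV y hxy
    -- use the Sierpiński space mapping the closed point to `x` and the open point to `y`
    set ρ : ULift.{u} Bool → X := fun p => if p.down then y else x with hρdef
    have hρcont : @Continuous _ _ sierpTop tX ρ := by
      rw [@continuous_def _ _ sierpTop tX]
      intro U hU hmem
      have hx : x ∈ U := by simpa [hρdef] using hmem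
      have hy : y ∈ U := isOpen_isUpperSetWrt hU hx hxy
      simpa [hρdef] using hy
    have hopen := hV (ULift.{u} Bool) sierpTop sierp_coreCompact ρ hρcont
    have : (⟨false⟩ : ULift.{u} Bool) ∈ ρ ⁻¹' V := by simpa [hρdef] using hxV
    have := hopen this
    simpa [hρdef] using this
  refine ⟨upper, fun x y => ?_⟩
  constructor
  · intro h
    -- ccg-specialization implies specialization since tX-opens are ccg-open
    rw [specLE, mem_closure_iff]
    intro U hU hxU
    have : x ∈ @closure X (ccgTopology X) {y} := h
    have h2 := (@mem_closure_iff X (ccgTopology X) _ _).mp this U (isOpen_ccgOpen hU) hxU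
    exact h2
  · intro h
    show x ∈ @closure X (ccgTopology X) {y}
    rw [@mem_closure_iff X (ccgTopology X) _ _]
    intro U hU hxU
    exact ⟨y, upper U hU hxU h, rfl⟩
end

section
/- The Scott space of the dcpo P = ℕ × ℕ × (ℕ ∪ {∞}), with order (i₁,j₁,m₁) ≤ (i₂,j₂,m₂) iff (i₁=i₂, j₁=j₂, m₁ ≤ m₂ ≤ ∞) or (i₂ = i₁+1, m₁ ≤ j₂, m₂ = ∞), is well-filtered but not sober, and its irreducible closed subsets are exactly the principal lower sets ↓x together with P itself. -/
open Set TopologicalSpace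

universe u

/-- Jia's dcpo: `ℕ × ℕ × (ℕ ∪ {∞})`. -/
def JiaP : Type := ℕ × ℕ × ℕ∞

/-- The order on Jia's dcpo. -/
def JiaLE (a b : JiaP) : Prop :=
  (a.1 = b.1 ∧ a.2.1 = b.2.1 ∧ a.2.2 ≤ b.2.2) ∨
    (b.1 = a.1 + 1 ∧ a.2.2 ≤ (b.2.1 : ℕ∞) ∧ b.2.2 = ⊤)

/-- The Scott topology on Jia's dcpo. -/
def JiaTop : TopologicalSpace JiaP := scottTop JiaLE

/-- Irreducible closed subsets of Jia's Scott space. -/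
def JiaIrrCl (A : Set JiaP) : Prop :=
  @IsIrreducible JiaP JiaTop A ∧ @IsClosed JiaP JiaTop A

/-- The standard sobrification of Jia's Scott space. -/
def JiaSob := {A : Set JiaP // JiaIrrCl A}

/-- The hull-kernel topology on the sobrification of Jia's Scott space. -/
def JiaSobTop : TopologicalSpace JiaSob := @hullTop JiaP JiaTop JiaIrrCl


namespace JiaAux
open Set

attribute [local instance] JiaTop

@[simp] lemma eta (z : JiaP) : ((z.1, z.2.1, z.2.2) : JiaP) = z := rfl

lemma jle_refl (a : JiaP) : JiaLE a a := Or.inl ⟨rfl, rfl, le_refl _⟩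

lemma coe_ne_top' (k : ℕ) : (k : ℕ∞) ≠ ⊤ := by simp

lemma jle_trans {a b c : JiaP} (hab : JiaLE a b) (hbc : JiaLE b c) : JiaLE a c := by
  rcases hab with ⟨h1, h2, h3⟩ | ⟨h1, h2, h3⟩ <;> rcases hbc with ⟨g1, g2, g3⟩ | ⟨g1, g2, g3⟩
  · exact Or.inl ⟨h1.trans g1, h2.trans g2, h3.trans g3⟩
  · exact Or.inr ⟨by omega, h3.trans g2, g3⟩
  · exact Or.inr ⟨by omega, by rw [← g2]; exact h2, top_le_iff.mp (h3 ▸ g3)⟩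
  · exfalso
    rw [h3] at g2
    exact coe_ne_top' c.2.1 (top_le_iff.mp g2)

lemma jle_antisymm {a b : JiaP} (hab : JiaLE a b) (hba : JiaLE b a) : a = b := by
  rcases hab with ⟨h1, h2, h3⟩ | ⟨h1, h2, h3⟩
  · rcases hba with ⟨g1, g2, g3⟩ | ⟨g1, g2, g3⟩
    · have : a.2.2 = b.2.2 := le_antisymm h3 g3
      rw [← eta a, ← eta b, h1, h2, this]
    · omega
  · rcases hba with ⟨g1, g2, g3⟩ | ⟨g1, g2, g3⟩
    · omega
    · omega

lemma jle_level {a b : JiaP} (h : JiaLE a b) : b.1 = a.1 ∨ b.1 = a.1 + 1 := by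
  rcases h with ⟨h1, _, _⟩ | ⟨h1, _, _⟩
  · exact Or.inl h1.symm
  · exact Or.inr h1

lemma jle_level_le {a b : JiaP} (h : JiaLE a b) : a.1 ≤ b.1 := by
  rcases jle_level h with h | h <;> omega

lemma top_of_all_coe_le {σ : ℕ∞} (h : ∀ n : ℕ, (n : ℕ∞) ≤ σ) : σ = ⊤ := by
  cases σ with
  | top => rfl
  | coe k =>
    have := h (k+1)
    exact absurd (by exact_mod_cast this) (by omega)

lemma sSup_mem_or_top (V : Set ℕ∞) (hne : V.Nonempty) : sSup V ∈ V ∨ sSup V = ⊤ := by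
  by_cases h : sSup V = ⊤
  · exact Or.inr h
  left
  cases hσ : sSup V with
  | top => exact absurd hσ h
  | coe k =>
    cases k with
    | zero =>
      obtain ⟨m, hm⟩ := hne
      have : m ≤ sSup V := le_sSup hm
      rw [hσ] at this
      have hm0 : m = 0 := by simpa using this
      rw [Nat.cast_zero, ← hm0]; exact hm
    | succ k =>
      have hlt : (k : ℕ∞) < sSup V := by
        rw [hσ]; exact_mod_cast Nat.lt_succ_self k
      obtain ⟨m, hmV, hkm⟩ := lt_sSup_iff.mp hlt
      have hm2 : m ≤ ((k+1 : ℕ) : ℕ∞) := hσ ▸ le_sSup hmV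
      have hmne : m ≠ ⊤ := fun ht => by rw [ht] at hm2; exact coe_ne_top' (k+1) (top_le_iff.mp hm2)
      cases m with
      | top => exact absurd rfl hmne
      | coe nm =>
        have h1 : k < nm := by exact_mod_cast hkm
        have h2 : nm ≤ k + 1 := by exact_mod_cast hm2
        have hnm1 : nm = k + 1 := by omega
        exact hnm1 ▸ hmV

/-- Dichotomy for directed subsets. -/
lemma jdirected_cases {D : Set JiaP} (hD : DirectedSubset JiaLE D) :
    (∃ c ∈ D, ∀ d ∈ D, JiaLE d c) ∨ (∃ p q : ℕ, ∀ d ∈ D, d.1 = p ∧ d.2.1 = q) := by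
  by_cases hsame : ∀ a ∈ D, ∀ b ∈ D, a.1 = b.1 ∧ a.2.1 = b.2.1
  · right
    obtain ⟨d₀, hd₀⟩ := hD.1
    exact ⟨d₀.1, d₀.2.1, fun d hd => hsame d hd d₀ hd₀⟩
  left
  push_neg at hsame
  obtain ⟨a, ha, b, hb, hab⟩ := hsame
  obtain ⟨c, hc, hac, hbc⟩ := hD.2 a ha b hb
  have hctop : c.2.2 = ⊤ := by
    rcases hac with ⟨h1, h2, _⟩ | ⟨_, _, h3⟩
    · rcases hbc with ⟨g1, g2, _⟩ | ⟨_, _, g3⟩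
      · exact absurd (h2.trans g2.symm) (hab (h1.trans g1.symm))
      · exact g3
    · exact h3
  have hmax : ∀ e : JiaP, JiaLE c e → e = c := by
    intro e he
    rcases he with ⟨h1, h2, h3⟩ | ⟨_, h2, _⟩
    · rw [hctop] at h3
      have : e.2.2 = ⊤ := top_le_iff.mp h3
      rw [← eta e, ← eta c, h1, h2, this, hctop]
    · rw [hctop] at h2
      exact absurd (top_le_iff.mp h2) (coe_ne_top' e.2.1)
  refine ⟨c, hc, fun d hd => ?_⟩
  obtain ⟨e, he, hde, hce⟩ := hD.2 d hd c hc
  rw [hmax e hce] at hde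
  exact hde

lemma sup_unique {D : Set JiaP} {s t : JiaP} (hs : IsSupWrt JiaLE D s) (ht : IsSupWrt JiaLE D t) : s = t :=
  jle_antisymm (hs.2 t ht.1) (ht.2 s hs.1)

/-- The supremum of a subset of a single chain. -/
lemma chain_sup {D : Set JiaP} {p q : ℕ} (hne : D.Nonempty) (hch : ∀ d ∈ D, d.1 = p ∧ d.2.1 = q) :
    IsSupWrt JiaLE D ((p, q, sSup {m : ℕ∞ | ((p, q, m) : JiaP) ∈ D}) : JiaP) := by
  set V : Set ℕ∞ := {m : ℕ∞ | ((p, q, m) : JiaP) ∈ D} with hV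
  have hmem : ∀ d ∈ D, d.2.2 ∈ V := by
    intro d hd
    have h := hch d hd
    show ((p, q, d.2.2) : JiaP) ∈ D
    rw [← h.1, ← h.2, eta]; exact hd
  constructor
  · intro d hd
    exact Or.inl ⟨(hch d hd).1, (hch d hd).2, le_sSup (hmem d hd)⟩
  · intro t ht
    obtain ⟨d₀, hd₀⟩ := hne
    rcases ht d₀ hd₀ with ⟨h1, h2, _⟩ | ⟨h1, _, h3⟩
    · -- t is in the same chain
      have ht1 : t.1 = p := by rw [← h1, (hch d₀ hd₀).1]
      have ht2 : t.2.1 = q := by rw [← h2, (hch d₀ hd₀).2]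
      have hb : ∀ m ∈ V, m ≤ t.2.2 := by
        intro m hm
        rcases ht _ hm with ⟨_, _, g3⟩ | ⟨g1, _, _⟩
        · exact g3
        · exfalso; rw [ht1] at g1; simp at g1
      exact Or.inl ⟨ht1.symm, ht2.symm, sSup_le hb⟩
    · -- t is a jump target
      have ht1 : t.1 = p + 1 := by rw [h1, (hch d₀ hd₀).1]
      have hb : ∀ m ∈ V, m ≤ (t.2.1 : ℕ∞) := by
        intro m hm
        rcases ht _ hm with ⟨g1, _, _⟩ | ⟨_, g2, _⟩
        · exfalso; have hg : p = t.1 := g1; omega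
        · exact g2
      exact Or.inr ⟨ht1, sSup_le hb, h3⟩

/-- Characterization of Scott-open sets of Jia's poset. -/
lemma jopen_iff {U : Set JiaP} :
    IsOpen U ↔ (IsUpperSetWrt JiaLE U ∧
      ∀ p q : ℕ, ((p, q, (⊤ : ℕ∞)) : JiaP) ∈ U → ∃ n : ℕ, ((p, q, (n : ℕ∞)) : JiaP) ∈ U) := by
  constructor
  · rintro ⟨hup, hsc⟩
    refine ⟨hup, fun p q htop => ?_⟩
    set D : Set JiaP := {z | ∃ n : ℕ, z = ((p, q, (n:ℕ∞)) : JiaP)} with hD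
    have hdir : DirectedSubset JiaLE D := by
      refine ⟨⟨((p,q,(0:ℕ∞)) : JiaP), ⟨0, rfl⟩⟩, ?_⟩
      rintro a ⟨n, rfl⟩ b ⟨n', rfl⟩
      refine ⟨((p, q, ((max n n' : ℕ) : ℕ∞)) : JiaP), ⟨max n n', rfl⟩, Or.inl ⟨rfl, rfl, ?_⟩, Or.inl ⟨rfl, rfl, ?_⟩⟩
      · show ((n:ℕ):ℕ∞) ≤ ((max n n' : ℕ):ℕ∞); exact_mod_cast le_max_left n n'
      · show ((n':ℕ):ℕ∞) ≤ ((max n n' : ℕ):ℕ∞); exact_mod_cast le_max_right n n'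
    have hch : ∀ d ∈ D, d.1 = p ∧ d.2.1 = q := by rintro d ⟨n, rfl⟩; exact ⟨rfl, rfl⟩
    have hsupV : sSup {m : ℕ∞ | ((p, q, m) : JiaP) ∈ D} = ⊤ := by
      apply top_of_all_coe_le
      intro n
      exact le_sSup ⟨n, rfl⟩
    have hsup := chain_sup hdir.1 hch
    rw [hsupV] at hsup
    obtain ⟨d, hdD, hdU⟩ := hsc D hdir _ hsup htop
    obtain ⟨n, rfl⟩ := hdD
    exact ⟨n, hdU⟩
  · rintro ⟨hup, hmate⟩
    refine ⟨hup, ?_⟩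
    intro D hD s hs hsU
    rcases jdirected_cases hD with ⟨c, hc, hub⟩ | ⟨p, q, hch⟩
    · have hcs : IsSupWrt JiaLE D c := ⟨hub, fun t ht => ht c hc⟩
      exact ⟨c, hc, (sup_unique hs hcs) ▸ hsU⟩
    · have hsup := chain_sup hD.1 hch
      have hseq := sup_unique hs hsup
      set V : Set ℕ∞ := {m : ℕ∞ | ((p, q, m) : JiaP) ∈ D} with hV
      have hVne : V.Nonempty := by
        obtain ⟨d₀, hd₀⟩ := hD.1
        refine ⟨d₀.2.2, ?_⟩
        show ((p, q, d₀.2.2) : JiaP) ∈ D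
        rw [← (hch d₀ hd₀).1, ← (hch d₀ hd₀).2, eta]; exact hd₀
      rcases sSup_mem_or_top V hVne with hmem | htop
      · exact ⟨_, hmem, hseq ▸ hsU⟩
      · rw [hseq, htop] at hsU
        obtain ⟨n, hn⟩ := hmate p q hsU
        have hlt : (n : ℕ∞) < sSup V := by rw [htop]; exact lt_of_le_of_ne le_top (coe_ne_top' n)
        obtain ⟨m, hmV, hnm⟩ := lt_sSup_iff.mp hlt
        exact ⟨_, hmV, hup hn (Or.inl ⟨rfl, rfl, le_of_lt hnm⟩)⟩

end JiaAux
namespace JiaAux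
open Set

attribute [local instance] JiaTop

/-! ### Specific open and closed sets -/

def Ylev (L : ℕ) : Set JiaP := {z | L ≤ z.1}

def Wop (h : ℕ → ℕ) : Set JiaP := {z | h z.1 ≤ z.2.1 ∧ (h (z.1+1) : ℕ∞) ≤ z.2.2}

def Bop (g : ℕ → ℕ → ℕ) : Set JiaP := {z | z.2.2 = ⊤ ∨ (g z.1 z.2.1 : ℕ∞) ≤ z.2.2}

def ChainS (p q : ℕ) : Set JiaP := {z | z.1 = p ∧ z.2.1 = q}

def Nop (y : JiaP) (h : ℕ → ℕ) : Set JiaP :=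
  ChainS y.1 y.2.1 ∪ ({z | z.1 = y.1 + 1 ∧ (h (y.1+2) : ℕ∞) ≤ z.2.2} ∪
    {z | y.1 + 2 ≤ z.1 ∧ h z.1 ≤ z.2.1 ∧ (h (z.1+1) : ℕ∞) ≤ z.2.2})

def downS (x : JiaP) : Set JiaP := {y | JiaLE y x}

lemma isOpen_Ylev (L : ℕ) : IsOpen (Ylev L) := by
  rw [jopen_iff]
  constructor
  · intro a ha b hab
    exact le_trans ha (jle_level_le hab)
  · intro p q h
    exact ⟨0, h⟩

lemma isOpen_Wop (h : ℕ → ℕ) : IsOpen (Wop h) := by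
  rw [jopen_iff]
  constructor
  · rintro a ⟨ha1, ha2⟩ b hab
    rcases hab with ⟨g1, g2, g3⟩ | ⟨g1, g2, g3⟩
    · exact ⟨by rw [← g1, ← g2]; exact ha1, by rw [← g1]; exact le_trans ha2 g3⟩
    · refine ⟨?_, by rw [g3]; exact le_top⟩
      have : (h (a.1+1) : ℕ∞) ≤ (b.2.1 : ℕ∞) := le_trans ha2 g2
      rw [g1]
      exact_mod_cast this
  · rintro p q ⟨h1, _⟩
    exact ⟨h (p+1), h1, le_refl _⟩

lemma isOpen_Bop (g : ℕ → ℕ → ℕ) : IsOpen (Bop g) := by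
  rw [jopen_iff]
  constructor
  · rintro a ha b hab
    rcases hab with ⟨g1, g2, g3⟩ | ⟨g1, g2, g3⟩
    · rcases ha with ha | ha
      · left; rw [ha] at g3; exact top_le_iff.mp g3
      · right; rw [← g1, ← g2]; exact le_trans ha g3
    · left; exact g3
  · intro p q _
    exact ⟨g p q, Or.inr (le_refl _)⟩

lemma isOpen_ChY (y : JiaP) : IsOpen (ChainS y.1 y.2.1 ∪ Ylev (y.1+1)) := by
  rw [jopen_iff]
  constructor
  · rintro a (⟨ha1, ha2⟩ | ha) b hab
    · rcases hab with ⟨g1, g2, _⟩ | ⟨g1, _, _⟩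
      · exact Or.inl ⟨g1 ▸ ha1, g2 ▸ ha2⟩
      · exact Or.inr (by show y.1 + 1 ≤ b.1; omega)
    · exact Or.inr (le_trans ha (jle_level_le hab))
  · rintro p q (⟨h1, h2⟩ | h)
    · exact ⟨0, Or.inl ⟨h1, h2⟩⟩
    · exact ⟨0, Or.inr h⟩

lemma isOpen_ChBY (y : JiaP) (g : ℕ → ℕ → ℕ) :
    IsOpen (ChainS y.1 y.2.1 ∪ (Ylev (y.1+1) ∩ Bop g)) := by
  rw [jopen_iff]
  constructor
  · rintro a (⟨ha1, ha2⟩ | ⟨haY, haB⟩) b hab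
    · rcases hab with ⟨g1, g2, _⟩ | ⟨g1, _, g3⟩
      · exact Or.inl ⟨g1 ▸ ha1, g2 ▸ ha2⟩
      · exact Or.inr ⟨by show y.1 + 1 ≤ b.1; omega, Or.inl g3⟩
    · refine Or.inr ⟨le_trans haY (jle_level_le hab), ?_⟩
      exact (jopen_iff.mp (isOpen_Bop g)).1 haB hab
  · rintro p q (⟨h1, h2⟩ | ⟨hY, _⟩)
    · exact ⟨0, Or.inl ⟨h1, h2⟩⟩
    · exact ⟨g p q, Or.inr ⟨hY, Or.inr (le_refl _)⟩⟩

lemma isOpen_Nop (y : JiaP) (h : ℕ → ℕ) : IsOpen (Nop y h) := by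
  rw [jopen_iff]
  constructor
  · rintro a (⟨ha1, ha2⟩ | ⟨ha1, ha2⟩ | ⟨ha1, ha2, ha3⟩) b hab
    · rcases hab with ⟨g1, g2, _⟩ | ⟨g1, _, g3⟩
      · exact Or.inl ⟨g1 ▸ ha1, g2 ▸ ha2⟩
      · exact Or.inr (Or.inl ⟨by omega, by rw [g3]; exact le_top⟩)
    · rcases hab with ⟨g1, g2, g3⟩ | ⟨g1, g2, g3⟩
      · exact Or.inr (Or.inl ⟨g1 ▸ ha1, le_trans ha2 g3⟩)
      · refine Or.inr (Or.inr ⟨by omega, ?_, by rw [g3]; exact le_top⟩)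
        have : (h (y.1+2) : ℕ∞) ≤ (b.2.1 : ℕ∞) := le_trans ha2 g2
        have hb1 : b.1 = y.1 + 2 := by omega
        rw [hb1]
        exact_mod_cast this
    · rcases hab with ⟨g1, g2, g3⟩ | ⟨g1, g2, g3⟩
      · exact Or.inr (Or.inr ⟨g1 ▸ ha1, by rw [← g1, ← g2]; exact ha2, by rw [← g1]; exact le_trans ha3 g3⟩)
      · refine Or.inr (Or.inr ⟨by omega, ?_, by rw [g3]; exact le_top⟩)
        have : (h (a.1+1) : ℕ∞) ≤ (b.2.1 : ℕ∞) := le_trans ha3 g2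
        rw [g1]
        exact_mod_cast this
  · rintro p q (⟨h1, h2⟩ | ⟨h1, _⟩ | ⟨h1, h2, _⟩)
    · exact ⟨0, Or.inl ⟨h1, h2⟩⟩
    · exact ⟨h (y.1+2), Or.inr (Or.inl ⟨h1, le_refl _⟩)⟩
    · exact ⟨h (p+1), Or.inr (Or.inr ⟨h1, h2, le_refl _⟩)⟩

lemma mem_Nop_self (y : JiaP) (h : ℕ → ℕ) : y ∈ Nop y h := Or.inl ⟨rfl, rfl⟩

lemma isClosed_downS (x : JiaP) : IsClosed (downS x) := by
  rw [← isOpen_compl_iff, jopen_iff]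
  constructor
  · intro a ha b hab hb
    exact ha (jle_trans hab hb)
  · intro p q htop
    by_contra hno
    push_neg at hno
    have hno : ∀ n : ℕ, JiaLE ((p,q,(n:ℕ∞)) : JiaP) x := fun n => Classical.byContradiction (fun h => hno n h)
    apply htop
    show JiaLE ((p,q,(⊤:ℕ∞)) : JiaP) x
    have h0 := hno 0
    rcases h0 with ⟨h1, h2, _⟩ | ⟨h1, h2, h3⟩
    · -- x is in the chain (p, q)
      have hx1 : x.1 = p := h1.symm
      have hx2 : x.2.1 = q := h2.symm
      have : ∀ n : ℕ, (n : ℕ∞) ≤ x.2.2 := by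
        intro n
        rcases hno n with ⟨_, _, g3⟩ | ⟨g1, _, _⟩
        · exact g3
        · exfalso; have : x.1 = p + 1 := g1; omega
      exact Or.inl ⟨hx1.symm, hx2.symm, (top_of_all_coe_le this) ▸ le_refl _⟩
    · -- x is a jump target
      exfalso
      have hx1 : x.1 = p + 1 := h1
      rcases hno (x.2.1 + 1) with ⟨g1, _, _⟩ | ⟨_, g2, _⟩
      · have : p = x.1 := g1; omega
      · have hg2 : ((x.2.1 + 1 : ℕ) : ℕ∞) ≤ (x.2.1 : ℕ∞) := g2
        have : x.2.1 + 1 ≤ x.2.1 := by exact_mod_cast hg2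
        omega

lemma jclosed_lower {C : Set JiaP} (hC : IsClosed C) {y z : JiaP} (hz : z ∈ C) (hyz : JiaLE y z) :
    y ∈ C := by
  by_contra hy
  exact ((jopen_iff.mp (isOpen_compl_iff.mpr hC)).1 hy hyz) hz

lemma jclosed_bound {C : Set JiaP} (hC : IsClosed C) {p q : ℕ}
    (h : ((p,q,(⊤:ℕ∞)) : JiaP) ∉ C) : ∃ N : ℕ, ∀ n : ℕ, N ≤ n → ((p,q,(n:ℕ∞)) : JiaP) ∉ C := by
  obtain ⟨hup, hmate⟩ := jopen_iff.mp (isOpen_compl_iff.mpr hC)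
  obtain ⟨n₀, hn₀⟩ := hmate p q h
  refine ⟨n₀, fun n hn => hup hn₀ (Or.inl ⟨rfl, rfl, ?_⟩)⟩
  show ((n₀:ℕ):ℕ∞) ≤ ((n:ℕ):ℕ∞)
  exact_mod_cast hn

lemma jclosed_top {C : Set JiaP} (hC : IsClosed C) {p q : ℕ}
    (h : ∀ N : ℕ, ∃ n : ℕ, N ≤ n ∧ ((p,q,(n:ℕ∞)) : JiaP) ∈ C) : ((p,q,(⊤:ℕ∞)) : JiaP) ∈ C := by
  by_contra htop
  obtain ⟨N, hN⟩ := jclosed_bound hC htop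
  obtain ⟨n, hn, hmem⟩ := h N
  exact hN n hn hmem

lemma jclosed_dirSup {C : Set JiaP} (hC : IsClosed C) {D : Set JiaP} (hD : DirectedSubset JiaLE D)
    (hsub : D ⊆ C) {s : JiaP} (hs : IsSupWrt JiaLE D s) : s ∈ C := by
  by_contra hsC
  obtain ⟨d, hdD, hdC⟩ := (isOpen_compl_iff.mpr hC).2 D hD s hs hsC
  exact hdC (hsub hdD)

lemma jclosure_singleton (x : JiaP) : closure {x} = downS x := by
  apply le_antisymm
  · exact closure_minimal (by intro z hz; rw [hz]; exact jle_refl x) (isClosed_downS x)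
  · intro y hy
    exact jclosed_lower isClosed_closure (subset_closure rfl) hy

lemma jT0 : T0Space JiaP := by
  rw [t0Space_iff_inseparable]
  intro x y hxy
  have h := inseparable_iff_closure_eq.mp hxy
  rw [jclosure_singleton, jclosure_singleton] at h
  have hx : x ∈ downS y := by rw [← h]; exact jle_refl x
  have hy : y ∈ downS x := by rw [h]; exact jle_refl y
  exact jle_antisymm hx hy

end JiaAux
namespace JiaAux
open Set

attribute [local instance] JiaTop

lemma jsup_exists (D : Set JiaP) (hD : DirectedSubset JiaLE D) : ∃ s, IsSupWrt JiaLE D s := by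
  rcases jdirected_cases hD with ⟨c, hc, hub⟩ | ⟨p, q, hch⟩
  · exact ⟨c, hub, fun t ht => ht c hc⟩
  · exact ⟨_, chain_sup hD.1 hch⟩

/-- Every element of a closed set lies below a maximal element of that set. -/
lemma jmax_above {A : Set JiaP} (hA : IsClosed A) {a : JiaP} (ha : a ∈ A) :
    ∃ m, m ∈ A ∧ JiaLE a m ∧ ∀ z ∈ A, JiaLE m z → z = m := by
  let T := {z : JiaP // z ∈ A ∧ JiaLE a z}
  have hbdd : ∀ c : Set T, IsChain (fun u v : T => JiaLE u.1 v.1) c →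
      ∃ ub : T, ∀ u ∈ c, JiaLE u.1 ub.1 := by
    intro c hchain
    rcases c.eq_empty_or_nonempty with rfl | ⟨u₀, hu₀⟩
    · exact ⟨⟨a, ha, jle_refl a⟩, fun u hu => absurd hu (notMem_empty u)⟩
    · set D : Set JiaP := Subtype.val '' c with hD
      have hdir : DirectedSubset JiaLE D := by
        refine ⟨⟨u₀.1, u₀, hu₀, rfl⟩, ?_⟩
        rintro x ⟨u, hu, rfl⟩ y ⟨v, hv, rfl⟩
        rcases eq_or_ne u v with rfl | huv
        · exact ⟨u.1, ⟨u, hu, rfl⟩, jle_refl _, jle_refl _⟩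
        · rcases hchain hu hv huv with h | h
          · exact ⟨v.1, ⟨v, hv, rfl⟩, h, jle_refl _⟩
          · exact ⟨u.1, ⟨u, hu, rfl⟩, jle_refl _, h⟩
      obtain ⟨s, hs⟩ := jsup_exists D hdir
      have hsA : s ∈ A := jclosed_dirSup hA hdir (by rintro x ⟨u, hu, rfl⟩; exact u.2.1) hs
      have has : JiaLE a s := jle_trans u₀.2.2 (hs.1 u₀.1 ⟨u₀, hu₀, rfl⟩)
      exact ⟨⟨s, hsA, has⟩, fun u hu => hs.1 u.1 ⟨u, hu, rfl⟩⟩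
  obtain ⟨m, hm⟩ := exists_maximal_of_chains_bounded hbdd (fun hxy hyz => jle_trans hxy hyz)
  refine ⟨m.1, m.2.1, m.2.2, ?_⟩
  intro z hz hmz
  have : JiaLE (⟨z, hz, jle_trans m.2.2 hmz⟩ : T).1 m.1 := hm ⟨z, hz, jle_trans m.2.2 hmz⟩ hmz
  exact jle_antisymm this hmz

/-- Cascade: an open set containing a top point contains cofinally many top points at
every higher level. -/
lemma jcascade {U : Set JiaP} (hU : IsOpen U) {p q : ℕ} (h : ((p,q,(⊤:ℕ∞)) : JiaP) ∈ U) :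
    ∀ p', p < p' → ∃ n : ℕ, ∀ k : ℕ, n ≤ k → ((p',k,(⊤:ℕ∞)) : JiaP) ∈ U := by
  obtain ⟨hup, hmate⟩ := jopen_iff.mp hU
  intro p' hp'
  induction p' with
  | zero => omega
  | succ p' ih =>
    rcases Nat.lt_or_ge p p' with hlt | hge
    · obtain ⟨n, hn⟩ := ih hlt
      obtain ⟨n₁, hn₁⟩ := hmate p' n (hn n (le_refl n))
      refine ⟨n₁, fun k hk => hup hn₁ (Or.inr ⟨rfl, ?_, rfl⟩)⟩
      show ((n₁:ℕ):ℕ∞) ≤ ((k:ℕ):ℕ∞)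
      exact_mod_cast hk
    · have hpp : p = p' := by omega
      subst hpp
      obtain ⟨n₀, hn₀⟩ := hmate p q h
      refine ⟨n₀, fun k hk => hup hn₀ (Or.inr ⟨rfl, ?_, rfl⟩)⟩
      show ((n₀:ℕ):ℕ∞) ≤ ((k:ℕ):ℕ∞)
      exact_mod_cast hk

lemma top_mem_of_mem {U : Set JiaP} (hU : IsOpen U) {x : JiaP} (hx : x ∈ U) :
    ((x.1, x.2.1, (⊤:ℕ∞)) : JiaP) ∈ U :=
  (jopen_iff.mp hU).1 hx (Or.inl ⟨rfl, rfl, le_top⟩)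

lemma jirr_univ : IsIrreducible (univ : Set JiaP) := by
  constructor
  · exact ⟨((0,0,(0:ℕ∞)) : JiaP), trivial⟩
  · intro U V hU hV hUne hVne
    obtain ⟨x, _, hxU⟩ := hUne
    obtain ⟨y, _, hyV⟩ := hVne
    have hxT := top_mem_of_mem hU hxU
    have hyT := top_mem_of_mem hV hyV
    set p : ℕ := max x.1 y.1 + 1 with hp
    obtain ⟨nU, hnU⟩ := jcascade hU hxT p (by omega)
    obtain ⟨nV, hnV⟩ := jcascade hV hyT p (by omega)
    exact ⟨((p, max nU nV, (⊤:ℕ∞)) : JiaP), trivial,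
      hnU _ (le_max_left _ _), hnV _ (le_max_right _ _)⟩

end JiaAux
namespace JiaAux
open Set

attribute [local instance] JiaTop

lemma infinite_unbounded {S : Set ℕ} (h : S.Infinite) : ∀ n : ℕ, ∃ k ∈ S, n ≤ k := by
  intro n
  by_contra hno
  push_neg at hno
  exact h (Set.Finite.subset (Set.finite_lt_nat n) (fun k hk => hno k hk))

/-- Classification of irreducible closed subsets. -/
lemma jirr_class {A : Set JiaP} (hirr : IsIrreducible A) (hcl : IsClosed A) :
    (∃ x, A = downS x) ∨ A = univ := by
  by_cases hmax : ∃ x ∈ A, ∀ y ∈ A, JiaLE y x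
  · obtain ⟨x, hxA, hx⟩ := hmax
    exact Or.inl ⟨x, le_antisymm (fun y hy => hx y hy) (fun y hy => jclosed_lower hcl hxA hy)⟩
  right
  push_neg at hmax
  obtain ⟨a₀, ha₀⟩ := hirr.1
  have hpre := hirr.2
  -- A has points at arbitrarily high levels
  have hlev : ∀ L : ℕ, ∃ c ∈ A, L ≤ c.1 := by
    intro L
    induction L with
    | zero => exact ⟨a₀, ha₀, Nat.zero_le _⟩
    | succ L ih =>
      obtain ⟨c, hcA, hcL⟩ := ih
      obtain ⟨a, haA, hca, hamax⟩ := jmax_above hcl hcA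
      obtain ⟨b, hbA, hba⟩ := hmax a haA
      obtain ⟨c', hc'A, hc'U, hc'V⟩ := hpre _ _ (isOpen_ChY a)
        (isOpen_compl_iff.mpr (isClosed_downS a))
        ⟨a, haA, Or.inl ⟨rfl, rfl⟩⟩ ⟨b, hbA, hba⟩
      have hac := jle_level_le hca
      rcases hc'U with ⟨h1, h2⟩ | hY
      · exfalso
        have hle : JiaLE a c' := by
          rcases le_total a.2.2 c'.2.2 with h | h
          · exact Or.inl ⟨h1.symm, h2.symm, h⟩
          · exact absurd (Or.inl ⟨h1, h2, h⟩ : JiaLE c' a) hc'V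
        have hca' := hamax c' hc'A hle
        exact hc'V (by rw [hca']; exact jle_refl a)
      · have hY' : a.1 + 1 ≤ c'.1 := hY
        exact ⟨c', hc'A, by omega⟩
  -- A meets every Wop h at arbitrarily high levels
  have hW : ∀ (h : ℕ → ℕ) (L : ℕ), ∃ z ∈ A, z ∈ Wop h ∧ L ≤ z.1 := by
    intro h L
    obtain ⟨cM, hcM, hcML⟩ := hlev (max L (a₀.1 + 2))
    obtain ⟨z, hzA, hzN, hzY⟩ := hpre _ _ (isOpen_Nop a₀ h) (isOpen_Ylev (max L (a₀.1 + 2)))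
      ⟨a₀, ha₀, mem_Nop_self a₀ h⟩ ⟨cM, hcM, hcML⟩
    have hzY' : max L (a₀.1 + 2) ≤ z.1 := hzY
    rcases hzN with ⟨h1, _⟩ | ⟨h1, _⟩ | ⟨_, h2, h3⟩
    · exfalso; omega
    · exfalso; omega
    · exact ⟨z, hzA, ⟨h2, h3⟩, by omega⟩
  -- A meets every Bop g at arbitrarily high levels
  have hB : ∀ (g : ℕ → ℕ → ℕ) (L : ℕ), ∃ z ∈ A, z ∈ Bop g ∧ L ≤ z.1 := by
    intro g L
    obtain ⟨cM, hcM, hcML⟩ := hlev (max L (a₀.1 + 1))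
    obtain ⟨z, hzA, hzO, hzY⟩ := hpre _ _ (isOpen_ChBY a₀ g) (isOpen_Ylev (max L (a₀.1 + 1)))
      ⟨a₀, ha₀, Or.inl ⟨rfl, rfl⟩⟩ ⟨cM, hcM, hcML⟩
    have hzY' : max L (a₀.1 + 1) ≤ z.1 := hzY
    rcases hzO with ⟨h1, _⟩ | ⟨_, hBz⟩
    · exfalso; omega
    · exact ⟨z, hzA, hBz, by omega⟩
  -- At arbitrarily high levels, A contains infinitely many top points
  have hC : ∀ L : ℕ, ∃ p, L ≤ p ∧ {k : ℕ | ((p,k,(⊤:ℕ∞)) : JiaP) ∈ A}.Infinite := by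
    intro L
    by_contra hno
    push_neg at hno
    have hfin : ∀ p, L ≤ p → {k : ℕ | ((p,k,(⊤:ℕ∞)) : JiaP) ∈ A}.Finite :=
      fun p hp => hno p hp
    have hbnd : ∀ p : ℕ, ∃ b : ℕ, L ≤ p → ∀ k : ℕ, ((p,k,(⊤:ℕ∞)) : JiaP) ∈ A → k ≤ b := by
      intro p
      by_cases hp : L ≤ p
      · obtain ⟨b, hb⟩ := (hfin p hp).bddAbove
        exact ⟨b, fun _ k hk => hb hk⟩
      · exact ⟨0, fun h => absurd h hp⟩
    choose bnd hbnd' using hbnd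
    have hgex : ∀ p q : ℕ, ∃ N : ℕ, ((p,q,(⊤:ℕ∞)):JiaP) ∉ A →
        ∀ n : ℕ, N ≤ n → ((p,q,(n:ℕ∞)):JiaP) ∉ A := by
      intro p q
      by_cases hpq : ((p,q,(⊤:ℕ∞)):JiaP) ∈ A
      · exact ⟨0, fun h => absurd hpq h⟩
      · obtain ⟨N, hN⟩ := jclosed_bound hcl hpq
        exact ⟨N, fun _ => hN⟩
    choose g hg' using hgex
    obtain ⟨z₁, hz₁A, hz₁W, hz₁L⟩ := hW (fun p => bnd p + 1) L
    obtain ⟨z₂, hz₂A, hz₂B, hz₂L⟩ := hB g L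
    obtain ⟨x, hxA, hx12⟩ := hpre _ _ ((isOpen_Wop (fun p => bnd p + 1)).inter (isOpen_Ylev L))
      ((isOpen_Bop g).inter (isOpen_Ylev L)) ⟨z₁, hz₁A, hz₁W, hz₁L⟩ ⟨z₂, hz₂A, hz₂B, hz₂L⟩
    obtain ⟨⟨⟨hxW1, _⟩, hxL⟩, ⟨hxB, _⟩⟩ := hx12
    have hxL' : L ≤ x.1 := hxL
    have hxW1' : bnd x.1 + 1 ≤ x.2.1 := hxW1
    have hqT : ((x.1, x.2.1, (⊤:ℕ∞)):JiaP) ∉ A := by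
      intro hT
      have := hbnd' x.1 hxL' x.2.1 hT
      omega
    by_cases hxt : x.2.2 = ⊤
    · apply hqT
      have hx_eq : ((x.1, x.2.1, (⊤:ℕ∞)):JiaP) = x := by rw [← hxt]; exact eta x
      rw [hx_eq]; exact hxA
    · obtain ⟨n, hn⟩ : ∃ n : ℕ, x.2.2 = (n : ℕ∞) := by
        cases hx22 : x.2.2 with
        | top => exact absurd hx22 hxt
        | coe n => exact ⟨n, rfl⟩
      rcases hxB with hxB | hxB
      · exact hxt hxB
      · have hgn : g x.1 x.2.1 ≤ n := by
          rw [hn] at hxB; exact_mod_cast hxB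
        apply hg' x.1 x.2.1 hqT n hgn
        have hx_eq : ((x.1, x.2.1, ((n:ℕ):ℕ∞)):JiaP) = x := by rw [← hn]; exact eta x
        rw [hx_eq]; exact hxA
  -- a level with infinitely many top points makes the level below full
  have hstep : ∀ p : ℕ, {k : ℕ | ((p+1,k,(⊤:ℕ∞)) : JiaP) ∈ A}.Infinite →
      ∀ q : ℕ, ∀ m : ℕ∞, ((p,q,m) : JiaP) ∈ A := by
    intro p hinf q m
    have hfinmem : ∀ n : ℕ, ((p,q,(n:ℕ∞)) : JiaP) ∈ A := by
      intro n
      obtain ⟨k, hkA, hk⟩ := infinite_unbounded hinf n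
      refine jclosed_lower hcl hkA (Or.inr ⟨rfl, ?_, rfl⟩)
      show ((n:ℕ):ℕ∞) ≤ ((k:ℕ):ℕ∞)
      exact_mod_cast hk
    cases m with
    | top => exact jclosed_top hcl (fun N => ⟨N, le_refl N, hfinmem N⟩)
    | coe n => exact hfinmem n
  apply eq_univ_of_forall
  intro z
  obtain ⟨p, hpL, hpinf⟩ := hC (z.1 + 1)
  have hdown : ∀ i : ℕ, i ≤ p - (z.1+1) → {k : ℕ | ((p - i, k,(⊤:ℕ∞)) : JiaP) ∈ A}.Infinite := by
    intro i
    induction i with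
    | zero => intro _; simpa using hpinf
    | succ i ih =>
      intro hi
      have h1 := ih (by omega)
      have h2 : p - i = (p - (i+1)) + 1 := by omega
      rw [h2] at h1
      have h3 := hstep (p - (i+1)) h1
      have h4 : {k : ℕ | ((p - (i+1), k,(⊤:ℕ∞)) : JiaP) ∈ A} = univ :=
        eq_univ_of_forall (fun k => h3 k ⊤)
      rw [h4]; exact infinite_univ
  have hQ := hdown (p - (z.1+1)) (le_refl _)
  have h2 : p - (p - (z.1+1)) = z.1 + 1 := by omega
  rw [h2] at hQ
  have h3 := hstep z.1 hQ z.2.1 z.2.2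
  rw [eta] at h3
  exact h3

end JiaAux
namespace JiaAux
open Set

attribute [local instance] JiaTop

/-- Every compact subset of Jia's poset has bounded levels. -/
lemma jcompact_bounded {F : Set JiaP} (hF : IsCompact F) : ∃ L : ℕ, ∀ z ∈ F, z.1 ≤ L := by
  by_contra hno
  push_neg at hno
  choose f hf1 hf2 using hno
  set h : ℕ → ℕ := fun ℓ => (Finset.range (ℓ+1)).sup (fun n => (f n).2.1) + 1 with hh
  have hcov : F ⊆ ⋃ y : JiaP, Nop y h := fun z _ => mem_iUnion.mpr ⟨z, mem_Nop_self z h⟩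
  obtain ⟨t, ht⟩ := hF.elim_finite_subcover (fun y : JiaP => Nop y h)
    (fun y => isOpen_Nop y h) hcov
  set n := t.sup (fun y : JiaP => y.1) + 2 with hn
  have hzF := hf1 n
  have hzlev : n < (f n).1 := hf2 n
  have hmem := ht hzF
  rw [mem_iUnion₂] at hmem
  obtain ⟨y, hyt, hyN⟩ := hmem
  have hyb : y.1 ≤ t.sup (fun y : JiaP => y.1) := Finset.le_sup hyt
  rcases hyN with ⟨h1, _⟩ | ⟨h1, _⟩ | ⟨_, h2, _⟩
  · have : (f n).1 = y.1 := h1; omega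
  · have : (f n).1 = y.1 + 1 := h1; omega
  · have hnr : n ∈ Finset.range ((f n).1 + 1) := by rw [Finset.mem_range]; omega
    have hhe : h (f n).1 = (Finset.range ((f n).1 + 1)).sup (fun k => (f k).2.1) + 1 := rfl
    have h2' : h (f n).1 ≤ (f n).2.1 := h2
    have hb : (f n).2.1 ≤ (Finset.range ((f n).1 + 1)).sup (fun k => (f k).2.1) :=
      Finset.le_sup (f := fun k => (f k).2.1) hnr
    omega

lemma jsat_upper {K : Set JiaP} (hK : Saturated K) {y x : JiaP} (hy : y ∈ K)
    (hyx : JiaLE y x) : x ∈ K := by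
  rw [hK]
  intro V hV
  exact (jopen_iff.mp hV.1).1 (hV.2 hy) hyx

lemma chain_finset_min {c : Set (Set JiaP)} (hc : IsChain (· ⊆ ·) c) :
    ∀ t : Finset (Set JiaP), (∀ C ∈ t, C ∈ c) → t.Nonempty →
      ∃ C₀ ∈ t, ∀ C ∈ t, C₀ ⊆ C := by
  classical
  intro t
  induction t using Finset.induction_on with
  | empty => intro _ hne; exact absurd hne (by simp)
  | @insert a s ha ih =>
    intro hsub _
    rcases s.eq_empty_or_nonempty with rfl | hs
    · refine ⟨a, Finset.mem_insert_self a _, ?_⟩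
      intro C hC
      rcases Finset.mem_insert.mp hC with rfl | hC
      · exact subset_rfl
      · exact absurd hC (Finset.notMem_empty C)
    · obtain ⟨C₀, hC₀s, hC₀min⟩ := ih (fun C hC => hsub C (Finset.mem_insert_of_mem hC)) hs
      have haC : a ∈ c := hsub a (Finset.mem_insert_self a s)
      have hC₀c : C₀ ∈ c := hsub C₀ (Finset.mem_insert_of_mem hC₀s)
      rcases eq_or_ne a C₀ with rfl | hne'
      · refine ⟨a, Finset.mem_insert_self a s, ?_⟩
        intro C hC
        rcases Finset.mem_insert.mp hC with rfl | hC
        · exact subset_rfl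
        · exact hC₀min C hC
      · rcases hc haC hC₀c hne' with hss | hss
        · refine ⟨a, Finset.mem_insert_self a s, ?_⟩
          intro C hC
          rcases Finset.mem_insert.mp hC with rfl | hC
          · exact subset_rfl
          · exact hss.trans (hC₀min C hC)
        · refine ⟨C₀, Finset.mem_insert_of_mem hC₀s, ?_⟩
          intro C hC
          rcases Finset.mem_insert.mp hC with rfl | hC
          · exact hss
          · exact hC₀min C hC

lemma jwf : WellFiltered JiaP := by
  classical
  refine ⟨jT0, ?_⟩
  intro 𝒦 h𝒦ne hprops hfilt U hU hint
  by_contra hno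
  push_neg at hno
  set ℱ : Set (Set JiaP) := (fun K => K \ U) '' 𝒦 with hℱ
  have hFprops : ∀ F ∈ ℱ, F.Nonempty ∧ IsCompact F := by
    rintro F ⟨K, hK, rfl⟩
    constructor
    · obtain ⟨x, hxK, hxU⟩ := not_subset.mp (hno K hK)
      exact ⟨x, hxK, hxU⟩
    · show IsCompact (K \ U)
      rw [diff_eq]
      exact (hprops K hK).2.1.inter_right hU.isClosed_compl
  have hFfilt : ∀ F₁ ∈ ℱ, ∀ F₂ ∈ ℱ, ∃ F₃ ∈ ℱ, F₃ ⊆ F₁ ∧ F₃ ⊆ F₂ := by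
    rintro _ ⟨K₁, hK₁, rfl⟩ _ ⟨K₂, hK₂, rfl⟩
    obtain ⟨K₃, hK₃, h31, h32⟩ := hfilt K₁ hK₁ K₂ hK₂
    exact ⟨K₃ \ U, ⟨K₃, hK₃, rfl⟩, diff_subset_diff_left h31, diff_subset_diff_left h32⟩
  set 𝒜 : Set (Set JiaP) := {C | IsClosed C ∧ ∀ F ∈ ℱ, (C ∩ F).Nonempty} with h𝒜
  have huniv𝒜 : (univ : Set JiaP) ∈ 𝒜 :=
    ⟨isClosed_univ, fun F hF => by rw [univ_inter]; exact (hFprops F hF).1⟩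
  have hzorn : ∀ c ⊆ 𝒜, IsChain (· ⊆ ·) c → ∃ lb ∈ 𝒜, ∀ s ∈ c, lb ⊆ s := by
    intro c hc𝒜 hchain
    refine ⟨⋂₀ insert univ c, ⟨?_, ?_⟩, fun s hs => sInter_subset_of_mem (mem_insert_of_mem _ hs)⟩
    · refine isClosed_sInter ?_
      rintro C (rfl | hC)
      · exact isClosed_univ
      · exact (hc𝒜 hC).1
    · intro F hF
      by_contra hempty
      rw [not_nonempty_iff_eq_empty] at hempty
      have hFcomp := (hFprops F hF).2
      have hcov : F ⊆ ⋃ C : (insert univ c : Set (Set JiaP)), ((C : Set JiaP)ᶜ) := by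
        intro z hzF
        by_contra hz
        simp only [mem_iUnion, mem_compl_iff, not_exists, not_not] at hz
        have : z ∈ ⋂₀ insert univ c ∩ F := ⟨fun C hC => hz ⟨C, hC⟩, hzF⟩
        rw [hempty] at this
        exact this
      obtain ⟨t, ht⟩ := hFcomp.elim_finite_subcover _
        (fun C : (insert univ c : Set (Set JiaP)) => by
          refine isOpen_compl_iff.mpr ?_
          rcases C.2 with h | h
          · rw [h]; exact isClosed_univ
          · exact (hc𝒜 h).1) hcov
      have hchain' : IsChain (· ⊆ ·) (insert univ c) := by
        refine hchain.insert ?_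
        intro b _ _
        exact Or.inr (subset_univ b)
      have ht'sub : ∀ C ∈ t.image Subtype.val, C ∈ insert univ c := by
        intro C hC
        obtain ⟨⟨C', hC'⟩, _, rfl⟩ := Finset.mem_image.mp hC
        exact hC'
      have ht'ne : (t.image Subtype.val).Nonempty := by
        rcases t.eq_empty_or_nonempty with rfl | hne
        · exfalso
          obtain ⟨w, hw⟩ := (hFprops F hF).1
          have := ht hw
          simp at this
        · exact hne.image _
      obtain ⟨C₀, hC₀t, hC₀min⟩ := chain_finset_min hchain' (t.image Subtype.val) ht'sub ht'ne
      have hC₀𝒜 : C₀ ∈ 𝒜 := by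
        rcases ht'sub C₀ hC₀t with h | h
        · rw [h]; exact huniv𝒜
        · exact hc𝒜 h
      obtain ⟨w, hwC₀, hwF⟩ := hC₀𝒜.2 F hF
      have := ht hwF
      rw [mem_iUnion₂] at this
      obtain ⟨C, hCt, hwC⟩ := this
      have hC₀C : C₀ ⊆ (C : Set JiaP) :=
        hC₀min _ (Finset.mem_image.mpr ⟨C, hCt, rfl⟩)
      exact hwC (hC₀C hwC₀)
  obtain ⟨A, hAmin⟩ := zorn_superset 𝒜 hzorn
  obtain ⟨hAcl, hAmeets⟩ := hAmin.1
  obtain ⟨K₀, hK₀⟩ := h𝒦ne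
  have hF₀ : (K₀ \ U) ∈ ℱ := ⟨K₀, hK₀, rfl⟩
  have hAne : A.Nonempty := by
    obtain ⟨w, hw, _⟩ := hAmeets _ hF₀
    exact ⟨w, hw⟩
  have hApre : IsPreirreducible A := by
    intro V₁ V₂ hV₁ hV₂ hAV₁ hAV₂
    by_contra hVV
    rw [not_nonempty_iff_eq_empty] at hVV
    have hCmiss : ∀ V : Set JiaP, IsOpen V → (A ∩ V).Nonempty →
        ∃ F ∈ ℱ, ((A \ V) ∩ F) = ∅ := by
      intro V hV hAV
      by_contra hcon
      push_neg at hcon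
      have hmem𝒜 : (A \ V) ∈ 𝒜 := by
        refine ⟨by rw [diff_eq]; exact hAcl.inter (isClosed_compl_iff.mpr hV), ?_⟩
        intro F hF
        exact hcon F hF
      have hsub := hAmin.2 hmem𝒜 diff_subset
      obtain ⟨yv, hyvA, hyvV⟩ := hAV
      exact (hsub hyvA).2 hyvV
    obtain ⟨F₁, hF₁, hE₁⟩ := hCmiss V₁ hV₁ hAV₁
    obtain ⟨F₂, hF₂, hE₂⟩ := hCmiss V₂ hV₂ hAV₂
    obtain ⟨F₃, hF₃, h31, h32⟩ := hFfilt F₁ hF₁ F₂ hF₂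
    obtain ⟨w, hwA, hwF₃⟩ := hAmeets F₃ hF₃
    by_cases hw1 : w ∈ V₁
    · by_cases hw2 : w ∈ V₂
      · have : w ∈ A ∩ (V₁ ∩ V₂) := ⟨hwA, hw1, hw2⟩
        rw [hVV] at this; exact this
      · have : w ∈ (A \ V₂) ∩ F₂ := ⟨⟨hwA, hw2⟩, h32 hwF₃⟩
        rw [hE₂] at this; exact this
    · have : w ∈ (A \ V₁) ∩ F₁ := ⟨⟨hwA, hw1⟩, h31 hwF₃⟩
      rw [hE₁] at this; exact this
  have hAeq : ∀ F ∈ ℱ, A = closure (A ∩ F) := by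
    intro F hF
    have hsub : closure (A ∩ F) ⊆ A := closure_minimal inter_subset_left hAcl
    have hmem𝒜 : closure (A ∩ F) ∈ 𝒜 := by
      refine ⟨isClosed_closure, ?_⟩
      intro F' hF'
      obtain ⟨F₃, hF₃, h31, h32⟩ := hFfilt F hF F' hF'
      obtain ⟨w, hwA, hwF₃⟩ := hAmeets F₃ hF₃
      exact ⟨w, subset_closure ⟨hwA, h31 hwF₃⟩, h32 hwF₃⟩
    exact le_antisymm (hAmin.2 hmem𝒜 hsub) hsub
  have hAF₀compact : IsCompact (A ∩ (K₀ \ U)) := by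
    exact ((hFprops _ hF₀).2).inter_left hAcl
  obtain ⟨L, hL⟩ := jcompact_bounded hAF₀compact
  have hclosedL : IsClosed {z : JiaP | z.1 ≤ L} := by
    rw [← isOpen_compl_iff]
    have : {z : JiaP | z.1 ≤ L}ᶜ = Ylev (L+1) := by
      ext z
      simp only [mem_compl_iff, mem_setOf_eq]
      constructor
      · intro h; show L + 1 ≤ z.1; omega
      · intro h; have : L + 1 ≤ z.1 := h; omega
    rw [this]
    exact isOpen_Ylev (L+1)
  have hAbdd : A ⊆ {z : JiaP | z.1 ≤ L} := by
    rw [hAeq _ hF₀]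
    exact closure_minimal (fun z hz => hL z hz) hclosedL
  have hAnu : A ≠ univ := by
    intro heq
    have : ((L+1, 0, (0:ℕ∞)) : JiaP) ∈ A := by rw [heq]; trivial
    have := hAbdd this
    have h' : L + 1 ≤ L := this
    omega
  rcases jirr_class ⟨hAne, hApre⟩ hAcl with ⟨x, hAx⟩ | h
  · have hxA : x ∈ A := by rw [hAx]; exact jle_refl x
    have hxU : x ∉ U := by
      intro hxU
      have hxcl : x ∈ closure (A ∩ (K₀ \ U)) := by rw [← hAeq _ hF₀]; exact hxA
      obtain ⟨w, hwU, hwAF⟩ := mem_closure_iff.mp hxcl U hU hxU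
      exact hwAF.2.2 hwU
    have hxK : ∀ K ∈ 𝒦, x ∈ K := by
      intro K hK
      obtain ⟨w, hwA, hwF⟩ := hAmeets (K \ U) ⟨K, hK, rfl⟩
      have hwx : JiaLE w x := by rw [hAx] at hwA; exact hwA
      exact jsat_upper (hprops K hK).2.2 hwF.1 hwx
    exact hxU (hint (fun K hK => hxK K hK))
  · exact hAnu h

end JiaAux

section StmtFinal

attribute [local instance] JiaTop

/-- Jia's poset is a dcpo whose Scott space is well-filtered but not sober,
and whose irreducible closed subsets are exactly the principal lower sets `↓x` together
with `P` itself. -/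
theorem stmt6 :
    (∀ D : Set JiaP, DirectedSubset JiaLE D → ∃ s : JiaP, IsSupWrt JiaLE D s) ∧
      @WellFiltered JiaP JiaTop ∧
      ¬ @SoberSpace JiaP JiaTop ∧
      (∀ A : Set JiaP, JiaIrrCl A ↔ ((∃ x : JiaP, A = {y | JiaLE y x}) ∨ A = Set.univ)) := by
  refine ⟨JiaAux.jsup_exists, JiaAux.jwf, ?_, ?_⟩
  · rintro ⟨hT0, hsob⟩
    obtain ⟨x, hx, -⟩ := hsob univ JiaAux.jirr_univ isClosed_univ
    have hmem : ((x.1 + 1, 0, (0:ℕ∞)) : JiaP) ∈ closure ({x} : Set JiaP) := by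
      rw [← hx]; trivial
    rw [JiaAux.jclosure_singleton] at hmem
    rcases JiaAux.jle_level hmem with h | h
    · have h' : x.1 = x.1 + 1 := h; omega
    · have h' : x.1 = x.1 + 2 := h; omega
  · intro A
    constructor
    · intro hA
      rcases JiaAux.jirr_class hA.1 hA.2 with ⟨x, h⟩ | h
      · exact Or.inl ⟨x, h⟩
      · exact Or.inr h
    · rintro (⟨x, rfl⟩ | rfl)
      · refine ⟨?_, JiaAux.isClosed_downS x⟩
        have h1 : IsIrreducible (closure ({x} : Set JiaP)) :=
          isIrreducible_singleton.closure
        rwa [JiaAux.jclosure_singleton] at h1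
      · exact ⟨JiaAux.jirr_univ, isClosed_univ⟩

end StmtFinal
end

section
/- Let (X, τ) be an ω-well-filtered T₀ space. Then the space (X, CX), where CX is the core compactly generated topology of X, is again ω-well-filtered. -/
open Set TopologicalSpace

universe u

section AuxLemmas

/-- A compact subset contained in `W` is way below `W`. -/
lemma wayBelow_of_isCompact {C : Type v} [TopologicalSpace C] {V W : Set C}
    (hV : IsCompact V) (hVW : V ⊆ W) : WayBelow V W := by
  classical
  intro S hS hcov
  have hsub : V ⊆ ⋃ s : S, (s : Set C) := by
    intro x hx
    obtain ⟨W', hW'S, hxW'⟩ := hcov (hVW hx)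
    exact Set.mem_iUnion.mpr ⟨⟨W', hW'S⟩, hxW'⟩
  obtain ⟨F, hF⟩ := hV.elim_finite_subcover (fun s : S => (s : Set C)) (fun s => hS s s.2) hsub
  refine ⟨F.image Subtype.val, ?_, ?_⟩
  · intro W' hW'
    simp only [Finset.coe_image, Set.mem_image, Finset.mem_coe] at hW'
    obtain ⟨a, -, rfl⟩ := hW'
    exact a.2
  · intro x hx
    obtain ⟨i, hiF, hxi⟩ := Set.mem_iUnion₂.mp (hF hx)
    exact ⟨(i : Set C), Finset.mem_coe.mpr (Finset.mem_image_of_mem _ hiF), hxi⟩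

variable {X : Type u} [tX : TopologicalSpace X]

/-- Every open set is open in the core compactly generated topology. -/
lemma ccgOpen_of_isOpen {U : Set X} (hU : IsOpen U) : ccgOpen X U :=
  fun _C _tC _hc ρ hρ => hρ.isOpen_preimage U hU

/-- Compactness in the core compactly generated topology implies compactness. -/
lemma isCompact_of_ccg {s : Set X} (hs : @IsCompact X (ccgTopology X) s) : IsCompact s := by
  refine isCompact_of_finite_subcover fun Ucov hUo hc => ?_
  exact (@isCompact_iff_finite_subcover X (ccgTopology X) s).mp hs Ucov
    (fun i => ccgOpen_of_isOpen (hUo i)) hc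

/-- Sets open in the core compactly generated topology are upper sets for the
specialization order, via a probe from the (core compact) Sierpiński space. -/
lemma ccgOpen_upper {V : Set X} (hV : ccgOpen X V) :
    ∀ ⦃x⦄, x ∈ V → ∀ ⦃y⦄, specLE x y → y ∈ V := by
  classical
  intro x hx y hxy
  letI tb : TopologicalSpace (ULift.{u} Bool) :=
    { IsOpen := fun W => ULift.up false ∈ W → ULift.up true ∈ W
      isOpen_univ := fun _ => Set.mem_univ _
      isOpen_inter := fun U' V' hU' hV' hm => ⟨hU' hm.1, hV' hm.2⟩
      isOpen_sUnion := fun S hS hm => by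
        obtain ⟨W, hWS, hmW⟩ := hm
        exact ⟨W, hWS, hS W hWS hmW⟩ }
  have hcc : CoreCompact (ULift.{u} Bool) := by
    intro W hW p hp
    exact ⟨W, hW, hp, wayBelow_of_isCompact (Set.toFinite W).isCompact subset_rfl⟩
  have hρ : Continuous (fun p : ULift.{u} Bool => if p.down then y else x) := by
    rw [continuous_def]
    intro G hG
    intro hfalse
    have hxG : x ∈ G := by simpa using hfalse
    have hyG : y ∈ G := by
      obtain ⟨z, hzG, hzy⟩ := mem_closure_iff.mp hxy G hG hxG
      have : z = y := hzy
      rwa [this] at hzG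
    show ULift.up true ∈ (fun p : ULift.{u} Bool => if p.down then y else x) ⁻¹' G
    simpa using hyG
  have hopen := hV (ULift.{u} Bool) tb hcc _ hρ
  have h1 : ULift.up false ∈ (fun p : ULift.{u} Bool => if p.down then y else x) ⁻¹' V := by
    simpa using hx
  have h2 := hopen h1
  simpa using h2

/-- A point in every open set containing `K` lies above some point of `K`. -/
lemma exists_specLE_of_forall_open {K : Set X} {y : X}
    (hy : ∀ G : Set X, IsOpen G → K ⊆ G → y ∈ G) : ∃ a ∈ K, specLE a y := by
  by_contra hc
  push_neg at hc
  have hKG : K ⊆ (closure ({y} : Set X))ᶜ := fun a ha hmem => hc a ha hmem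
  exact hy _ isClosed_closure.isOpen_compl hKG (subset_closure rfl)

end AuxLemmas

/-- the core compactly generated topology of an ω-well-filtered space is
again ω-well-filtered. -/
theorem stmt7 {X : Type u} [tX : TopologicalSpace X] (h : OmegaWellFiltered X) :
    @OmegaWellFiltered X (ccgTopology X) := by
  classical
  obtain ⟨hT0, hwf⟩ := h
  refine ⟨?_, ?_⟩
  · -- T₀ transfers to the finer topology
    refine @T0Space.mk X (ccgTopology X) ?_
    intro x y hxy
    refine hT0.t0 ?_
    rw [inseparable_iff_forall_isOpen]
    intro s hs
    exact (@inseparable_iff_forall_isOpen X (ccgTopology X) x y).mp hxy s (ccgOpen_of_isOpen hs)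
  · intro K hK hfil U hU hQU
    -- Reduce to a decreasing subfamily L of K
    obtain ⟨J, hJ0, hJs⟩ : ∃ J : ℕ → ℕ, J 0 = 0 ∧
        ∀ n, K (J (n + 1)) ⊆ K (J n) ∧ K (J (n + 1)) ⊆ K (n + 1) := by
      refine ⟨fun n => Nat.rec 0 (fun n ih => (hfil ih (n + 1)).choose) n, rfl, fun n => ?_⟩
      exact (hfil _ (n + 1)).choose_spec
    -- the decreasing family
    have hLne : ∀ n, (K (J n)).Nonempty := fun n => (hK (J n)).1
    have hLcptC : ∀ n, @IsCompact X (ccgTopology X) (K (J n)) := fun n => (hK (J n)).2.1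
    have hLsatC : ∀ n, K (J n) =
        ⋂₀ {V : Set X | @IsOpen X (ccgTopology X) V ∧ K (J n) ⊆ V} :=
      fun n => (hK (J n)).2.2
    have hdec : ∀ n, K (J (n + 1)) ⊆ K (J n) := fun n => (hJs n).1
    have hAnti : Antitone (fun n => K (J n)) := antitone_nat_of_succ_le hdec
    have hLU : (⋂ n, K (J n)) ⊆ U := by
      intro x hx
      apply hQU
      rw [Set.mem_iInter] at hx ⊢
      intro n
      cases n with
      | zero => have h0 := hx 0; rwa [hJ0] at h0
      | succ m => exact (hJs m).2 (hx (m + 1))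
    have hLcpt : ∀ n, IsCompact (K (J n)) := fun n => isCompact_of_ccg (hLcptC n)
    -- each K (J n) is saturated in the original topology
    have hLsat : ∀ n, Saturated (K (J n)) := by
      intro n
      show K (J n) = ⋂₀ {G : Set X | IsOpen G ∧ K (J n) ⊆ G}
      refine Set.Subset.antisymm (fun x hx => Set.mem_sInter.mpr fun G hG => hG.2 hx) ?_
      intro y hy
      have hy' : ∀ G : Set X, IsOpen G → K (J n) ⊆ G → y ∈ G :=
        fun G h1 h2 => Set.mem_sInter.mp hy G ⟨h1, h2⟩
      obtain ⟨a, haL, hay⟩ := exists_specLE_of_forall_open hy'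
      rw [hLsatC n]
      exact Set.mem_sInter.mpr fun V hVmem => ccgOpen_upper hVmem.1 (hVmem.2 haL) hay
    by_cases hex : ∃ n, K (J n) ⊆ U
    · obtain ⟨n, hn⟩ := hex
      exact ⟨J n, hn⟩
    push_neg at hex
    -- the leftovers A n := K (J n) \ U are nonempty and compact
    have hAne : ∀ n, (K (J n) \ U).Nonempty := fun n => Set.diff_nonempty.mpr (hex n)
    have hAcptC : ∀ n, @IsCompact X (ccgTopology X) (K (J n) \ U) := fun n =>
      @IsCompact.diff X (ccgTopology X) _ _ (hLcptC n) hU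
    have hAcpt : ∀ n, IsCompact (K (J n) \ U) := fun n => isCompact_of_ccg (hAcptC n)
    have hAanti : Antitone (fun n => K (J n) \ U) := fun m n hmn =>
      Set.diff_subset_diff_left (hAnti hmn)
    -- Zorn: a minimal closed set meeting all the leftovers
    have hchain : ∀ c ⊆ {E : Set X | IsClosed E ∧ ∀ n, (E ∩ (K (J n) \ U)).Nonempty},
        IsChain (· ⊆ ·) c → c.Nonempty →
        ∃ lb ∈ {E : Set X | IsClosed E ∧ ∀ n, (E ∩ (K (J n) \ U)).Nonempty},
          ∀ s ∈ c, lb ⊆ s := by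
      intro c hc hch _
      refine ⟨⋂₀ c, ⟨isClosed_sInter fun E hE => (hc hE).1, fun n => ?_⟩,
        fun s hs => Set.sInter_subset_of_mem hs⟩
      by_contra hempty
      rw [Set.not_nonempty_iff_eq_empty] at hempty
      have hcov : (K (J n) \ U) ⊆ ⋃ E : c, ((E : Set X))ᶜ := by
        intro a ha
        have hnotin : a ∉ ⋂₀ c := by
          intro hmem
          have hx : a ∈ ⋂₀ c ∩ (K (J n) \ U) := ⟨hmem, ha⟩
          rw [hempty] at hx
          exact hx
        rw [Set.mem_sInter] at hnotin
        push_neg at hnotin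
        obtain ⟨E, hEc, haE⟩ := hnotin
        exact Set.mem_iUnion.mpr ⟨⟨E, hEc⟩, haE⟩
      obtain ⟨F, hF⟩ := (hAcpt n).elim_finite_subcover (fun E : c => ((E : Set X))ᶜ)
        (fun E => (hc E.2).1.isOpen_compl) hcov
      have hFne : (F.image (fun E : c => (E : Set X))).Nonempty := by
        obtain ⟨a, ha⟩ := hAne n
        obtain ⟨E, hEF, -⟩ := Set.mem_iUnion₂.mp (hF ha)
        exact ⟨E, Finset.mem_image_of_mem _ hEF⟩
      obtain ⟨M, hMmin'⟩ := Finset.exists_minimal hFne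
      have hMF : M ∈ F.image (fun E : c => (E : Set X)) := hMmin'.prop
      have hMmin : ∀ x ∈ F.image (fun E : c => (E : Set X)), ¬ x < M := fun x hx hlt =>
        lt_irrefl _ (lt_of_lt_of_le hlt (hMmin'.2 hx hlt.le))
      obtain ⟨EM, hEMF, hEMeq⟩ := Finset.mem_image.mp hMF
      have hMc : M ∈ c := hEMeq ▸ EM.2
      have hleast : ∀ E : c, E ∈ F → M ⊆ (E : Set X) := by
        intro E hEF'
        rcases eq_or_ne (E : Set X) M with heq | hne
        · rw [heq]
        · rcases hch hMc E.2 hne.symm with h1 | h1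
          · exact h1
          · have hlt : (E : Set X) < M := lt_of_le_of_ne h1 hne
            exact absurd hlt (hMmin _ (Finset.mem_image_of_mem _ hEF'))
      obtain ⟨a, haM, haA⟩ := (hc hMc).2 n
      obtain ⟨E, hEF, haE⟩ := Set.mem_iUnion₂.mp (hF haA)
      exact haE (hleast E hEF haM)
    obtain ⟨E, -, hEmin⟩ := zorn_superset_nonempty
      {E : Set X | IsClosed E ∧ ∀ n, (E ∩ (K (J n) \ U)).Nonempty} hchain Set.univ
      ⟨isClosed_univ, fun n => by simpa using hAne n⟩
    have hEclosed : IsClosed E := hEmin.prop.1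
    have hEA : ∀ n, (E ∩ (K (J n) \ U)).Nonempty := hEmin.prop.2
    -- minimality gives the tail property
    have htail : ∀ G : Set X, IsOpen G → (E ∩ G).Nonempty →
        ∃ k, ∀ n, k ≤ n → E ∩ (K (J n) \ U) ⊆ G := by
      intro G hG hEG
      by_cases hmem : E \ G ∈ {E : Set X | IsClosed E ∧ ∀ n, (E ∩ (K (J n) \ U)).Nonempty}
      · have heq : E \ G = E := hEmin.eq_of_subset hmem Set.diff_subset
        obtain ⟨x, hxE, hxG⟩ := hEG
        rw [← heq] at hxE
        exact (hxE.2 hxG).elim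
      · have hclosed : IsClosed (E \ G) := hEclosed.sdiff hG
        have hk : ∃ k, E \ G ∩ (K (J k) \ U) = ∅ := by
          by_contra h2
          push_neg at h2
          exact hmem ⟨hclosed, h2⟩
        obtain ⟨k, hk⟩ := hk
        refine ⟨k, fun n hn x hx => ?_⟩
        by_contra hxG
        have hxk : x ∈ E \ G ∩ (K (J k) \ U) := ⟨⟨hx.1, hxG⟩, hAanti hn hx.2⟩
        rw [hk] at hxk
        exact hxk
    -- E meets Q = ⋂ K (J n), by ω-well-filteredness of X
    have hEQ : (E ∩ ⋂ n, K (J n)).Nonempty := by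
      by_contra hcon
      rw [Set.not_nonempty_iff_eq_empty] at hcon
      have hsubEc : (⋂ n, K (J n)) ⊆ Eᶜ := by
        intro x hx hxE
        have hmem : x ∈ E ∩ ⋂ n, K (J n) := ⟨hxE, hx⟩
        rw [hcon] at hmem
        exact hmem
      obtain ⟨n, hn⟩ := hwf (fun n => K (J n)) (fun n => ⟨hLne n, hLcpt n, hLsat n⟩)
        (fun m n => ⟨max m n, hAnti (le_max_left m n), hAnti (le_max_right m n)⟩)
        Eᶜ hEclosed.isOpen_compl hsubEc
      obtain ⟨a, haE, haA⟩ := hEA n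
      exact hn haA.1 haE
    obtain ⟨u, huE, huL⟩ := hEQ
    have huU : u ∈ U := hLU huL
    choose cseq hcseq using hEA
    have hconv : ∀ G : Set X, IsOpen G → u ∈ G → ∃ k, ∀ n, k ≤ n → cseq n ∈ G := by
      intro G hG huG
      obtain ⟨k, hk⟩ := htail G hG ⟨u, huE, huG⟩
      exact ⟨k, fun n hn => hk n hn (hcseq n)⟩
    -- the convergent-sequence probe
    letI tseq : TopologicalSpace (ULift.{u} (Option ℕ)) :=
      { IsOpen := fun W => ULift.up none ∈ W → ∃ k, ∀ n, k ≤ n → ULift.up (some n) ∈ W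
        isOpen_univ := fun _ => ⟨0, fun n _ => Set.mem_univ _⟩
        isOpen_inter := fun U' V' hU' hV' hm => by
          obtain ⟨k1, h1⟩ := hU' hm.1
          obtain ⟨k2, h2⟩ := hV' hm.2
          exact ⟨max k1 k2, fun n hn => ⟨h1 n (le_trans (le_max_left _ _) hn),
            h2 n (le_trans (le_max_right _ _) hn)⟩⟩
        isOpen_sUnion := fun S hS hm => by
          obtain ⟨W, hWS, hmW⟩ := hm
          obtain ⟨k, hk⟩ := hS W hWS hmW
          exact ⟨k, fun n hn => ⟨W, hWS, hk n hn⟩⟩ }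
    have hcc : CoreCompact (ULift.{u} (Option ℕ)) := by
      intro W hW p hp
      obtain ⟨o⟩ := p
      cases o with
      | some n =>
        refine ⟨{ULift.up (some n)}, fun hmem => absurd hmem (by simp), rfl, ?_⟩
        exact wayBelow_of_isCompact isCompact_singleton (Set.singleton_subset_iff.mpr hp)
      | none =>
        obtain ⟨k, hk⟩ := hW hp
        refine ⟨insert (ULift.up none) {q | ∃ n, k ≤ n ∧ q = ULift.up (some n)},
          fun _ => ⟨k, fun n hn => Set.mem_insert_iff.mpr (Or.inr ⟨n, hn, rfl⟩)⟩,
          Set.mem_insert _ _, ?_⟩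
        intro S hS hcov
        obtain ⟨W₁, hW₁S, hnone₁⟩ := hcov hp
        obtain ⟨k₁, hk₁⟩ := hS W₁ hW₁S hnone₁
        have htot : ∀ n : ℕ, ∃ W', W' ∈ S ∧
            (ULift.up (some n) ∈ W → ULift.up (some n) ∈ W') := by
          intro n
          by_cases hn : ULift.up (some n) ∈ W
          · obtain ⟨W', h1, h2⟩ := hcov hn
            exact ⟨W', h1, fun _ => h2⟩
          · exact ⟨W₁, hW₁S, fun hmem => absurd hmem hn⟩
        choose g hgS hgmem using htot
        refine ⟨insert W₁ ((Finset.range (max k k₁)).image g), ?_, ?_⟩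
        · intro W' hW'
          rcases Finset.mem_insert.mp (Finset.mem_coe.mp hW') with rfl | hW''
          · exact hW₁S
          · obtain ⟨n, -, rfl⟩ := Finset.mem_image.mp hW''
            exact hgS n
        · intro q hq
          rcases Set.mem_insert_iff.mp hq with rfl | ⟨n, hn, rfl⟩
          · exact ⟨W₁, Finset.mem_coe.mpr (Finset.mem_insert_self _ _), hnone₁⟩
          · by_cases hge : k₁ ≤ n
            · exact ⟨W₁, Finset.mem_coe.mpr (Finset.mem_insert_self _ _), hk₁ n hge⟩
            · refine ⟨g n, Finset.mem_coe.mpr (Finset.mem_insert_of_mem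
                (Finset.mem_image_of_mem g (Finset.mem_range.mpr
                  (lt_of_lt_of_le (lt_of_not_ge hge) (le_max_right k k₁))))), ?_⟩
              exact hgmem n (hk n hn)
    have hρ : Continuous (fun p : ULift.{u} (Option ℕ) => Option.elim p.down u cseq) := by
      rw [continuous_def]
      intro G hG
      intro hnone
      obtain ⟨k, hk⟩ := hconv G hG hnone
      exact ⟨k, fun n hn => hk n hn⟩
    have hopen := hU (ULift.{u} (Option ℕ)) tseq hcc _ hρ
    have huP : ULift.up none ∈
        (fun p : ULift.{u} (Option ℕ) => Option.elim p.down u cseq) ⁻¹' U := huU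
    obtain ⟨k, hk⟩ := hopen huP
    have hckU : cseq k ∈ U := hk k le_rfl
    exact absurd hckU (hcseq k).2.2
end

section
/- Let X and Y be ω-well-filtered spaces and f : X → Y continuous. Then for every closed ω-well-filtered-determined subset A of X, sup A exists in X, sup f(A) exists in Y, and f(sup A) = sup f(A). -/
open Set TopologicalSpace

universe u

/-- `A` is an ω-well-filtered determined set (`WD_ω`-set): for every continuous map into
an ω-well-filtered space, the closure of the image of `A` is the closure of a unique
point. -/
def WDomega (X : Type u) [TopologicalSpace X] (A : Set X) : Prop :=
  ∀ (Z : Type u) (tZ : TopologicalSpace Z), @OmegaWellFiltered Z tZ →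
    ∀ g : X → Z, @Continuous X Z _ tZ g →
      ∃! z : Z, @closure Z tZ (g '' A) = @closure Z tZ ({z} : Set Z)

/-- if `X, Y` are ω-well-filtered, `f : X → Y` is continuous, and `A` is a
closed `WD_ω`-subset of `X`, then `sup A` exists, `sup f(A)` exists, and
`f(sup A) = sup f(A)` (suprema in the specialization orders). -/
theorem stmt8 {X Y : Type u} [TopologicalSpace X] [TopologicalSpace Y]
    (hX : OmegaWellFiltered X) (hY : OmegaWellFiltered Y)
    (f : X → Y) (hf : Continuous f)
    (A : Set X) (hA : IsClosed A) (hWD : WDomega X A) :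
    ∃ a : X, IsSupWrt (specLE : X → X → Prop) A a ∧
      IsSupWrt (specLE : Y → Y → Prop) (f '' A) (f a) := by
  obtain ⟨x, hx, -⟩ := hWD X ‹TopologicalSpace X› hX id continuous_id
  rw [image_id, hA.closure_eq] at hx
  have hxA : x ∈ A := hx ▸ subset_closure rfl
  have hspec : ∀ a ∈ A, specLE a x := fun a ha => by unfold specLE; rw [← hx]; exact ha
  refine ⟨x, ⟨hspec, fun t ht => ht x hxA⟩, ⟨?_, fun t ht => ht (f x) ⟨x, hxA, rfl⟩⟩⟩
  rintro - ⟨a, ha, rfl⟩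
  have h1 : f a ∈ f '' closure ({x} : Set X) := ⟨a, hspec a ha, rfl⟩
  have h2 : f '' closure ({x} : Set X) ⊆ closure ({f x} : Set Y) := by
    have := image_closure_subset_closure_image (s := ({x} : Set X)) hf
    simpa using this
  exact h2 h1
end
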